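/- arXiv:1102.2536 — 8 statements merged into one kernel-verified Lean document; each statement's English description precedes it below -/
import Mathlib

section
/- Let Q₀ be a probability measure on ℝ, not a point mass, and let Γ be an open interval of parameters β for which Z(β) = ∫ exp(βx) dQ₀(x) < ∞; for β ∈ Γ let Q_β be the probability measure with dQ_β/dQ₀ = exp(βx)/Z(β), with mean μ_β and variance σ²_β. Then for all α, β ∈ Γ there exists γ between α and β such that D(Q_α‖Q_β) = (μ_α − μ_β)² / (2 σ²_γ). -/
open MeasureTheory ProbabilityTheory Real

lemma aux_bound {a b t ε : ℝ} (hε : 0 < ε) (ha : a ≤ t - ε) (hb : t + ε ≤ b) (n : ℕ) (x : ℝ) :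
    |x| ^ n * Real.exp (t * x) ≤ (n.factorial * ε⁻¹ ^ n) * (Real.exp (a * x) + Real.exp (b * x)) := by
  have h0 : (0:ℝ) ≤ ε * |x| := by positivity
  have h1 : (ε * |x|) ^ n / n.factorial ≤ Real.exp (ε * |x|) := Real.pow_div_factorial_le_exp (x := ε * |x|) h0 n
  have hf : (0:ℝ) < n.factorial := by positivity
  have h2 : |x| ^ n ≤ n.factorial * ε⁻¹ ^ n * Real.exp (ε * |x|) := by
    rw [mul_pow, div_le_iff₀ hf] at h1
    have : |x| ^ n = ε⁻¹ ^ n * (ε ^ n * |x| ^ n) := by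
      rw [inv_pow, inv_mul_cancel_left₀ (pow_ne_zero n hε.ne')]
    rw [this]
    calc ε⁻¹ ^ n * (ε ^ n * |x| ^ n) ≤ ε⁻¹ ^ n * (Real.exp (ε * |x|) * n.factorial) := by
          have h4 : (0:ℝ) ≤ ε⁻¹ ^ n := (pow_pos (inv_pos.mpr hε) n).le
          exact mul_le_mul_of_nonneg_left h1 h4
      _ = n.factorial * ε⁻¹ ^ n * Real.exp (ε * |x|) := by ring
  have h3 : Real.exp (ε * |x|) * Real.exp (t * x) ≤ Real.exp (a * x) + Real.exp (b * x) := by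
    rw [← Real.exp_add]
    rcases le_or_gt 0 x with hx | hx
    · have hle : ε * |x| + t * x ≤ b * x := by rw [abs_of_nonneg hx]; nlinarith
      calc Real.exp (ε * |x| + t * x) ≤ Real.exp (b * x) := Real.exp_le_exp.mpr hle
        _ ≤ _ := le_add_of_nonneg_left (Real.exp_pos _).le
    · have hle : ε * |x| + t * x ≤ a * x := by rw [abs_of_neg hx]; nlinarith
      calc Real.exp (ε * |x| + t * x) ≤ Real.exp (a * x) := Real.exp_le_exp.mpr hle
        _ ≤ _ := le_add_of_nonneg_right (Real.exp_pos _).le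
  calc |x| ^ n * Real.exp (t * x)
      ≤ (n.factorial * ε⁻¹ ^ n * Real.exp (ε * |x|)) * Real.exp (t * x) :=
        mul_le_mul_of_nonneg_right h2 (Real.exp_pos _).le
    _ = (n.factorial * ε⁻¹ ^ n) * (Real.exp (ε * |x|) * Real.exp (t * x)) := by ring
    _ ≤ _ := mul_le_mul_of_nonneg_left h3 (by positivity)

lemma integrable_pow_exp {μ : Measure ℝ} {a b t : ℝ} (hat : a < t) (htb : t < b)
    (ha : Integrable (fun x => Real.exp (a * x)) μ)
    (hb : Integrable (fun x => Real.exp (b * x)) μ) (n : ℕ) :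
    Integrable (fun x => x ^ n * Real.exp (t * x)) μ := by
  set ε := min (t - a) (b - t) with hεdef
  have hε : 0 < ε := lt_min (by linarith) (by linarith)
  refine Integrable.mono' (((ha.add hb).const_mul (n.factorial * ε⁻¹ ^ n)))
    ((continuous_pow n |>.mul (Real.continuous_exp.comp (continuous_const.mul continuous_id))).aestronglyMeasurable)
    (Filter.Eventually.of_forall fun x => ?_)
  have : ‖x ^ n * Real.exp (t * x)‖ = |x| ^ n * Real.exp (t * x) := by
    rw [norm_mul, Real.norm_eq_abs, Real.norm_eq_abs, abs_pow, Real.abs_exp]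
  rw [this]
  exact aux_bound hε (by have := min_le_left (t-a) (b-t); simp only [hεdef]; linarith)
    (by have := min_le_right (t-a) (b-t); simp only [hεdef]; linarith) n x

lemma integrable_abs_pow_exp {μ : Measure ℝ} {a b t : ℝ} (hat : a < t) (htb : t < b)
    (ha : Integrable (fun x => Real.exp (a * x)) μ)
    (hb : Integrable (fun x => Real.exp (b * x)) μ) (n : ℕ) :
    Integrable (fun x => |x| ^ n * Real.exp (t * x)) μ :=
  (integrable_pow_exp hat htb ha hb n).abs.congr (by
    filter_upwards with x
    rw [abs_mul, abs_pow, Real.abs_exp])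

lemma hasDerivAt_integral_pow_exp {μ : Measure ℝ} {a b t₀ : ℝ} (hat : a < t₀) (htb : t₀ < b)
    (ha : Integrable (fun x => Real.exp (a * x)) μ)
    (hb : Integrable (fun x => Real.exp (b * x)) μ) (n : ℕ) :
    HasDerivAt (fun t => ∫ x, x ^ n * Real.exp (t * x) ∂μ)
      (∫ x, x ^ (n + 1) * Real.exp (t₀ * x) ∂μ) t₀ := by
  set ε := (min (t₀ - a) (b - t₀)) / 2 with hεdef
  have hε : 0 < ε := by
    have h1 : 0 < t₀ - a := by linarith
    have h2 : 0 < b - t₀ := by linarith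
    positivity
  have hmeas : ∀ (m : ℕ) (t : ℝ), AEStronglyMeasurable (fun x => x ^ m * Real.exp (t * x)) μ :=
    fun m t => ((continuous_pow m).mul
      (Real.continuous_exp.comp (continuous_const.mul continuous_id))).aestronglyMeasurable
  have key := hasDerivAt_integral_of_dominated_loc_of_deriv_le (μ := μ)
    (F := fun t x => x ^ n * Real.exp (t * x)) (F' := fun t x => x ^ (n + 1) * Real.exp (t * x))
    (bound := fun x => ((n+1).factorial * ε⁻¹ ^ (n+1)) * (Real.exp (a * x) + Real.exp (b * x)))
    (x₀ := t₀) (Metric.ball_mem_nhds t₀ hε)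
    (Filter.Eventually.of_forall fun t => hmeas n t)
    (integrable_pow_exp hat htb ha hb n)
    (hmeas (n+1) t₀)
    (Filter.Eventually.of_forall fun x => fun t ht => by
      have hnorm : ‖x ^ (n+1) * Real.exp (t * x)‖ = |x| ^ (n+1) * Real.exp (t * x) := by
        rw [norm_mul, Real.norm_eq_abs, Real.norm_eq_abs, abs_pow, Real.abs_exp]
      rw [hnorm]
      have htd : |t - t₀| < ε := by rwa [Metric.mem_ball, Real.dist_eq] at ht
      have h1 := abs_lt.mp htd
      have hmin1 := min_le_left (t₀ - a) (b - t₀)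
      have hmin2 := min_le_right (t₀ - a) (b - t₀)
      exact aux_bound hε (by simp only [hεdef] at h1 ⊢; linarith)
        (by simp only [hεdef] at h1 ⊢; linarith) (n+1) x)
    ((ha.add hb).const_mul _)
    (Filter.Eventually.of_forall fun x => fun t ht => by
      have hd : HasDerivAt (fun s => Real.exp (s * x)) (x * Real.exp (t * x)) t := by
        have : HasDerivAt (fun s : ℝ => s * x) x t := by
          simpa using (hasDerivAt_id t).mul_const x
        simpa [mul_comm] using this.exp
      have := hd.const_mul (x ^ n)
      exact this.congr_deriv (by ring))
  convert key.2 using 2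
/- Kullback-Leibler divergence `D(P‖Q)`: equal to `∫ log(dP/dQ) dP` when `P ≪ Q` and the
integrand is `P`-integrable, and `+∞` otherwise. -/
open Classical in
noncomputable def klDiv {Ω : Type*} [MeasurableSpace Ω] (P Q : Measure Ω) : EReal :=
  if P ≪ Q ∧ Integrable (fun ω => Real.log (P.rnDeriv Q ω).toReal) P
  then ((∫ ω, Real.log (P.rnDeriv Q ω).toReal ∂P : ℝ) : EReal)
  else ⊤

theorem stmt_0
    (Q₀ : Measure ℝ) [IsProbabilityMeasure Q₀]
    (hQ₀ : ∀ c : ℝ, Q₀ ≠ Measure.dirac c)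
    (Γ : Set ℝ) (hΓopen : IsOpen Γ) (hΓconn : Γ.OrdConnected)
    (hZ : ∀ β ∈ Γ, Integrable (fun x => Real.exp (β * x)) Q₀)
    (Q : ℝ → Measure ℝ)
    (hQ : ∀ β ∈ Γ, Q β = Q₀.withDensity (fun x =>
      ENNReal.ofReal (Real.exp (β * x) / ∫ y, Real.exp (β * y) ∂Q₀)))
    (μ : ℝ → ℝ) (hμ : ∀ β ∈ Γ, μ β = ∫ x, x ∂(Q β))
    (α β : ℝ) (hα : α ∈ Γ) (hβ : β ∈ Γ) :
    ∃ γ ∈ Set.Icc (min α β) (max α β),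
      klDiv (Q α) (Q β) =
        (((μ α - μ β) ^ 2 / (2 * variance id (Q γ)) : ℝ) : EReal) := by
  classical
  set Z : ℝ → ℝ := fun t => ∫ x, Real.exp (t * x) ∂Q₀ with hZdef
  set Z₁ : ℝ → ℝ := fun t => ∫ x, x * Real.exp (t * x) ∂Q₀ with hZ₁def
  set Z₂ : ℝ → ℝ := fun t => ∫ x, x ^ 2 * Real.exp (t * x) ∂Q₀ with hZ₂def
  set M : ℝ → ℝ := fun t => Z₁ t / Z t with hMdef
  set V : ℝ → ℝ := fun t => Z₂ t / Z t - (M t) ^ 2 with hVdef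
  set L : ℝ → ℝ := fun t => Real.log (Z t) with hLdef
  -- neighborhoods
  have hnbhd : ∀ t ∈ Γ, ∃ a b : ℝ, a < t ∧ t < b ∧
      Integrable (fun x => Real.exp (a * x)) Q₀ ∧ Integrable (fun x => Real.exp (b * x)) Q₀ := by
    intro t ht
    obtain ⟨δ, hδ, hball⟩ := Metric.isOpen_iff.mp hΓopen t ht
    have h1 : t - δ/2 ∈ Γ := hball (by
      rw [Metric.mem_ball, Real.dist_eq, show t - δ/2 - t = -(δ/2) by ring, abs_neg,
        abs_of_pos (by linarith)]
      linarith)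
    have h2 : t + δ/2 ∈ Γ := hball (by rw [Metric.mem_ball, Real.dist_eq]; rw [abs_of_pos (by linarith)]; linarith)
    exact ⟨t - δ/2, t + δ/2, by linarith, by linarith, hZ _ h1, hZ _ h2⟩
  have hZpos : ∀ t ∈ Γ, 0 < Z t := fun t ht => integral_exp_pos (hZ t ht)
  have hZderiv : ∀ t ∈ Γ, HasDerivAt Z (Z₁ t) t := by
    intro t ht
    obtain ⟨a, b, h1, h2, h3, h4⟩ := hnbhd t ht
    have := hasDerivAt_integral_pow_exp h1 h2 h3 h4 0
    simpa using this
  have hZ₁deriv : ∀ t ∈ Γ, HasDerivAt Z₁ (Z₂ t) t := by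
    intro t ht
    obtain ⟨a, b, h1, h2, h3, h4⟩ := hnbhd t ht
    have := hasDerivAt_integral_pow_exp h1 h2 h3 h4 1
    simpa using this
  have hMderiv : ∀ t ∈ Γ, HasDerivAt M (V t) t := by
    intro t ht
    have h := (hZ₁deriv t ht).div (hZderiv t ht) (hZpos t ht).ne'
    refine h.congr_deriv ?_
    have hz := (hZpos t ht).ne'
    simp only [hVdef, hMdef]
    field_simp
  have hLderiv : ∀ t ∈ Γ, HasDerivAt L (M t) t := by
    intro t ht
    exact (hZderiv t ht).log (hZpos t ht).ne'
  -- tilted identification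
  have hQt : ∀ t ∈ Γ, Q t = Q₀.tilted (fun x => t * x) := by
    intro t ht; rw [hQ t ht]; rfl
  have hQprob : ∀ t ∈ Γ, IsProbabilityMeasure (Q t) := by
    intro t ht; rw [hQt t ht]; exact isProbabilityMeasure_tilted (hZ t ht)
  -- integrability transfer
  have hint : ∀ t ∈ Γ, ∀ g : ℝ → ℝ,
      Integrable (fun x => (Real.exp (t * x) / Z t) * g x) Q₀ → Integrable g (Q t) := by
    intro t ht g hg
    rw [hQ t ht]
    have hmeas : AEMeasurable (fun x => Real.toNNReal (Real.exp (t * x) / Z t)) Q₀ :=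
      (((Real.continuous_exp.comp (continuous_const.mul continuous_id)).div_const
        (Z t)).measurable.real_toNNReal).aemeasurable
    have heq : (fun x : ℝ => ENNReal.ofReal (Real.exp (t * x) / ∫ y, Real.exp (t * y) ∂Q₀))
        = fun x => ((Real.toNNReal (Real.exp (t * x) / Z t) : NNReal) : ENNReal) := rfl
    rw [heq]
    refine (integrable_withDensity_iff_integrable_coe_smul₀ hmeas).mpr ?_
    refine hg.congr (Filter.Eventually.of_forall fun x => ?_)
    show Real.exp (t * x) / Z t * g x = ((Real.exp (t * x) / Z t).toNNReal : ℝ) • g x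
    rw [smul_eq_mul, Real.coe_toNNReal _ (by positivity)]
  have hint_pow : ∀ t ∈ Γ, ∀ n : ℕ, Integrable (fun x => x ^ n) (Q t) := by
    intro t ht n
    obtain ⟨a, b, h1, h2, h3, h4⟩ := hnbhd t ht
    refine hint t ht _ (((integrable_pow_exp h1 h2 h3 h4 n).const_mul (Z t)⁻¹).congr
      (Filter.Eventually.of_forall fun x => ?_))
    field_simp
  -- mean and second moment
  have hmom : ∀ t ∈ Γ, ∀ n : ℕ, ∫ x, x ^ n ∂(Q t) = (∫ x, x ^ n * Real.exp (t * x) ∂Q₀) / Z t := by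
    intro t ht n
    rw [hQt t ht, integral_tilted]
    have : (fun x => (Real.exp (t * x) / ∫ y, Real.exp (t * y) ∂Q₀) • x ^ n)
        = fun x => (x ^ n * Real.exp (t * x)) * (Z t)⁻¹ := by
      funext x
      rw [smul_eq_mul]
      show Real.exp (t * x) / Z t * x ^ n = _
      ring
    rw [this, integral_mul_const, div_eq_mul_inv]
  have hμM : ∀ t ∈ Γ, μ t = M t := by
    intro t ht
    have := hmom t ht 1
    simp only [pow_one] at this
    rw [hμ t ht, this]
  -- variance
  have hVar : ∀ t ∈ Γ, variance id (Q t) = V t := by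
    intro t ht
    haveI := hQprob t ht
    have hmem : MemLp (id : ℝ → ℝ) 2 (Q t) :=
      (memLp_two_iff_integrable_sq aestronglyMeasurable_id).mpr (by
        simpa using hint_pow t ht 2)
    rw [variance_eq_sub hmem]
    have e2 : (Q t)[(id : ℝ → ℝ) ^ 2] = Z₂ t / Z t := by
      rw [← hmom t ht 2]
      congr 1
    have e1 : (Q t)[(id : ℝ → ℝ)] = M t := by
      have h1 := hmom t ht 1
      simp only [pow_one] at h1
      rw [show (Q t)[(id : ℝ → ℝ)] = ∫ x, x ∂(Q t) from rfl, h1]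
    rw [e2, e1]
  have hVpos : ∀ t ∈ Γ, 0 < V t := by
    intro t ht
    haveI := hQprob t ht
    rw [← hVar t ht]
    rcases (variance_nonneg id (Q t)).lt_or_eq with h | h
    · exact h
    have hmem : MemLp (id : ℝ → ℝ) 2 (Q t) :=
      (memLp_two_iff_integrable_sq aestronglyMeasurable_id).mpr (by
        simpa using hint_pow t ht 2)
    have hev : evariance id (Q t) = 0 := by
      have hlt := hmem.evariance_lt_top
      have := h.symm
      rw [variance] at this
      rcases (ENNReal.toReal_eq_zero_iff _).mp this with h' | h'
      · exact h'
      · exact absurd h' hlt.ne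
    have hae : (id : ℝ → ℝ) =ᵐ[Q t] fun _ => ∫ x, id x ∂(Q t) :=
      (evariance_eq_zero_iff aemeasurable_id).mp hev
    set m := ∫ x, id x ∂(Q t) with hm
    have hac0 : Q₀ ≪ Q t := by
      rw [hQt t ht]; exact absolutelyContinuous_tilted (hZ t ht)
    have hae0 : ∀ᵐ x ∂Q₀, x = m := hac0.ae_eq hae
    exfalso
    apply hQ₀ m
    have hnull : Q₀ {x : ℝ | ¬ x = m} = 0 := ae_iff.mp hae0
    ext s hs
    rw [Measure.dirac_apply' m hs]
    by_cases hms : m ∈ s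
    · have hsub : sᶜ ⊆ {x : ℝ | ¬ x = m} := fun x hx he => hx (he ▸ hms)
      have hcnull : Q₀ sᶜ = 0 := measure_mono_null hsub hnull
      rw [(prob_compl_eq_zero_iff hs).mp hcnull]
      simp [Set.indicator_of_mem hms]
    · have hsub : s ⊆ {x : ℝ | ¬ x = m} := fun x hx he => hms (he ▸ hx)
      rw [measure_mono_null hsub hnull]
      simp [Set.indicator_of_notMem hms]
  -- KL divergence value
  haveI hQβprob := hQprob β hβ
  haveI hQαprob := hQprob α hα
  have htilted : (Q β).tilted (fun x => (α - β) * x) = Q α := by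
    rw [hQt β hβ, tilted_tilted (hZ β hβ), hQt α hα]
    congr 1
    funext x
    simp only [Pi.add_apply]
    ring
  have hac : Q α ≪ Q β := htilted ▸ tilted_absolutelyContinuous (Q β) _
  have hexpint : Integrable (fun x => Real.exp ((α - β) * x)) (Q β) := by
    refine hint β hβ _ (((hZ α hα).const_mul (Z β)⁻¹).congr
      (Filter.Eventually.of_forall fun x => ?_))
    show (Z β)⁻¹ * Real.exp (α * x) = Real.exp (β * x) / Z β * Real.exp ((α - β) * x)
    rw [div_eq_mul_inv, mul_comm (Real.exp (β * x)), mul_assoc, ← Real.exp_add,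
      show β * x + (α - β) * x = α * x by ring]
  have hZint : ∫ x, Real.exp ((α - β) * x) ∂(Q β) = Z α / Z β := by
    rw [hQt β hβ, integral_exp_tilted]
    have : (fun x : ℝ => Real.exp (((fun x => β * x) + fun x => (α - β) * x) x))
        = fun x => Real.exp (α * x) := by
      funext x; simp only [Pi.add_apply]; ring_nf
    rw [this]
  have hlogQβ : (fun x => Real.log ((Q α).rnDeriv (Q β) x).toReal)
      =ᵐ[Q β] fun x => (α - β) * x - Real.log (Z α / Z β) := by
    have h := log_rnDeriv_tilted_left_self (μ := Q β) (f := fun x => (α - β) * x) hexpint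
    rw [htilted, hZint] at h
    exact h
  have hlogQα : (fun x => Real.log ((Q α).rnDeriv (Q β) x).toReal)
      =ᵐ[Q α] fun x => (α - β) * x - Real.log (Z α / Z β) := hac.ae_eq hlogQβ
  have hxint : Integrable (fun x : ℝ => x) (Q α) := by simpa using hint_pow α hα 1
  have hintlog : Integrable (fun x => Real.log ((Q α).rnDeriv (Q β) x).toReal) (Q α) :=
    ((hxint.const_mul (α - β)).sub (integrable_const _)).congr hlogQα.symm
  have hklval : klDiv (Q α) (Q β) = (((α - β) * M α + (L β - L α) : ℝ) : EReal) := by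
    rw [klDiv, if_pos ⟨hac, hintlog⟩]
    norm_cast
    rw [integral_congr_ae hlogQα, integral_sub (hxint.const_mul (α - β)) (integrable_const _),
      integral_const_mul, integral_const]
    have hμα : ∫ x, x ∂(Q α) = M α := by rw [← hμ α hα]; exact hμM α hα
    rw [hμα]
    simp only [measure_univ, probReal_univ, ENNReal.toReal_one, smul_eq_mul, one_mul]
    rw [Real.log_div (hZpos α hα).ne' (hZpos β hβ).ne']
    simp only [hLdef]
    ring
  -- case α = β
  rcases eq_or_ne α β with heq | hne
  · refine ⟨α, by simp [heq], ?_⟩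
    rw [hklval, heq]
    norm_num
  -- main case
  set a := min α β with hadef
  set b := max α β with hbdef
  have hab : a < b := by
    rcases hne.lt_or_gt with h | h
    · simp [hadef, hbdef, min_eq_left h.le, max_eq_right h.le, h]
    · simp [hadef, hbdef, min_eq_right h.le, max_eq_left h.le, h]
  have hIcc : Set.Icc a b ⊆ Γ := by
    rcases le_total α β with h | h
    · rw [hadef, hbdef, min_eq_left h, max_eq_right h]
      exact hΓconn.out hα hβ
    · rw [hadef, hbdef, min_eq_right h, max_eq_left h]
      exact hΓconn.out hβ hα
  have haΓ : a ∈ Γ := hIcc (Set.left_mem_Icc.mpr hab.le)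
  have hbΓ : b ∈ Γ := hIcc (Set.right_mem_Icc.mpr hab.le)
  set F : ℝ → ℝ := fun t => L β - L t - (β - t) * M t with hFdef
  set G : ℝ → ℝ := fun t => (M t - M β) ^ 2 / 2 with hGdef
  have hFderiv : ∀ t ∈ Γ, HasDerivAt F ((t - β) * V t) t := by
    intro t ht
    have h1 : HasDerivAt (fun s => L β - L s) (-(M t)) t := by
      exact ((hasDerivAt_const t (L β)).sub (hLderiv t ht)).congr_deriv (by simp)
    have h2 : HasDerivAt (fun s => (β - s) * M s) ((-1) * M t + (β - t) * V t) t := by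
      exact (((hasDerivAt_const t β).sub (hasDerivAt_id t)).mul (hMderiv t ht)).congr_deriv (by simp)
    have := h1.sub h2
    exact this.congr_deriv (by ring)
  have hGderiv : ∀ t ∈ Γ, HasDerivAt G ((M t - M β) * V t) t := by
    intro t ht
    have h := (((hMderiv t ht).sub_const (M β)).pow 2).div_const 2
    exact h.congr_deriv (by ring)
  have hFc : ContinuousOn F (Set.Icc a b) :=
    fun t ht => ((hFderiv t (hIcc ht)).continuousAt).continuousWithinAt
  have hGc : ContinuousOn G (Set.Icc a b) :=
    fun t ht => ((hGderiv t (hIcc ht)).continuousAt).continuousWithinAt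
  obtain ⟨c, hc, hcr⟩ := exists_ratio_hasDerivAt_eq_ratio_slope F (fun t => (t - β) * V t) hab hFc
    (fun x hx => hFderiv x (hIcc (Set.Ioo_subset_Icc_self hx)))
    G (fun t => (M t - M β) * V t) hGc
    (fun x hx => hGderiv x (hIcc (Set.Ioo_subset_Icc_self hx)))
  have hcΓ : c ∈ Γ := hIcc (Set.Ioo_subset_Icc_self hc)
  have hFβ : F β = 0 := by simp [hFdef]
  have hGβ : G β = 0 := by simp [hGdef]
  have key : G α * ((c - β) * V c) = F α * ((M c - M β) * V c) := by
    rcases le_total α β with h | h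
    · have ha' : a = α := min_eq_left h
      have hb' : b = β := max_eq_right h
      rw [ha', hb', hFβ, hGβ] at hcr
      nlinarith [hcr]
    · have ha' : a = β := min_eq_right h
      have hb' : b = α := max_eq_left h
      rw [ha', hb', hFβ, hGβ] at hcr
      nlinarith [hcr]
  have hVc : 0 < V c := hVpos c hcΓ
  have key2 : G α * (c - β) = F α * (M c - M β) := by
    have h1 : (G α * (c - β)) * V c = (F α * (M c - M β)) * V c := by
      rw [mul_assoc, mul_assoc]; exact key
    exact mul_right_cancel₀ hVc.ne' h1
  -- second MVT
  have hcβ : c ≠ β := by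
    rcases le_total α β with h | h
    · have hb' : b = β := max_eq_right h
      exact fun hcb => (hc.2.ne (hcb.trans hb'.symm))
    · have ha' : a = β := min_eq_right h
      exact fun hcb => (hc.1.ne' (hcb.trans ha'.symm))
  have hβab : β ∈ Set.Icc a b := ⟨min_le_right α β, le_max_right α β⟩
  have hcab : c ∈ Set.Icc a b := Set.Ioo_subset_Icc_self hc
  set a' := min β c with ha'def
  set b' := max β c with hb'def
  have ha'b' : a' < b' := by
    rcases hcβ.lt_or_gt with h | h
    · simp [ha'def, hb'def, min_eq_right h.le, max_eq_left h.le, h]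
    · simp [ha'def, hb'def, min_eq_left h.le, max_eq_right h.le, h]
  have hIcc' : Set.Icc a' b' ⊆ Set.Icc a b := by
    rcases le_total β c with h | h
    · rw [ha'def, hb'def, min_eq_left h, max_eq_right h]
      exact Set.Icc_subset_Icc hβab.1 hcab.2
    · rw [ha'def, hb'def, min_eq_right h, max_eq_left h]
      exact Set.Icc_subset_Icc hcab.1 hβab.2
  have hMc : ContinuousOn M (Set.Icc a' b') :=
    fun t ht => ((hMderiv t (hIcc (hIcc' ht))).continuousAt).continuousWithinAt
  obtain ⟨ξ, hξ, hξr⟩ := exists_hasDerivAt_eq_slope M V ha'b' hMc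
    (fun x hx => hMderiv x (hIcc (hIcc' (Set.Ioo_subset_Icc_self hx))))
  have hξab : ξ ∈ Set.Icc a b := hIcc' (Set.Ioo_subset_Icc_self hξ)
  have hξΓ : ξ ∈ Γ := hIcc hξab
  have hslope : M c - M β = V ξ * (c - β) := by
    rcases le_total β c with h | h
    · have ha'' : a' = β := min_eq_left h
      have hb'' : b' = c := max_eq_right h
      rw [ha'', hb''] at hξr
      have hcb : c - β ≠ 0 := sub_ne_zero.mpr hcβ
      field_simp at hξr
      linarith [hξr]
    · have ha'' : a' = c := min_eq_right h
      have hb'' : b' = β := max_eq_left h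
      rw [ha'', hb''] at hξr
      have hcb : β - c ≠ 0 := sub_ne_zero.mpr hcβ.symm
      field_simp at hξr
      linarith [hξr]
  have hVξ : 0 < V ξ := hVpos ξ hξΓ
  have hfinal : F α = (M α - M β) ^ 2 / (2 * V ξ) := by
    have h1 : G α * (c - β) = F α * (V ξ * (c - β)) := by rw [key2, hslope]
    have hcb : c - β ≠ 0 := sub_ne_zero.mpr hcβ
    have h2 : G α = F α * V ξ := by
      have : (G α) * (c - β) = (F α * V ξ) * (c - β) := by rw [h1]; ring
      exact mul_right_cancel₀ hcb this
    rw [hGdef] at h2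
    field_simp
    rw [eq_comm]
    calc (M α - M β) ^ 2 = 2 * ((M α - M β) ^ 2 / 2) := by ring
      _ = 2 * (F α * V ξ) := by rw [← h2]
      _ = F α * (2 * V ξ) := by ring
    ring
  refine ⟨ξ, hξab, ?_⟩
  rw [hklval, hVar ξ hξΓ, hμM α hα, hμM β hβ]
  norm_cast
  rw [show (α - β) * M α + (L β - L α) = F α by simp only [hFdef]; ring, hfinal]
end

section
/- Let Q₀ be a probability measure on ℝ and let Γ be an open interval of parameters β for which Z(β) = ∫ exp(βx) dQ₀(x) < ∞; for β ∈ Γ let Q_β be the probability measure with dQ_β/dQ₀ = exp(βx)/Z(β), with mean μ_β and variance σ²_β. Then for all α, β ∈ Γ there exists γ between α and β such that D(Q_α‖Q_β) = (σ²_γ / 2)·(α − β)². -/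
open MeasureTheory ProbabilityTheory Real

lemma key_bound (n : ℕ) {u v s c : ℝ} (hc : 0 < c) (h1 : u ≤ s - c) (h2 : s + c ≤ v) (x : ℝ) :
    |x| ^ n * rexp (s * x) ≤ n.factorial / c ^ n * (rexp (u * x) + rexp (v * x)) := by
  have hcn : (0:ℝ) < c ^ n := pow_pos hc n
  have hpow : |x| ^ n ≤ n.factorial / c ^ n * rexp (c * |x|) := by
    have h := Real.pow_div_factorial_le_exp (x := c * |x|) (by positivity) n
    rw [div_le_iff₀ (by positivity), mul_pow] at h
    rw [div_mul_eq_mul_div, le_div_iff₀ hcn]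
    calc |x| ^ n * c ^ n = c ^ n * |x| ^ n := by ring
      _ ≤ rexp (c * |x|) * n.factorial := h
      _ = n.factorial * rexp (c * |x|) := by ring
  have hexp : rexp (c * |x| + s * x) ≤ rexp (u * x) + rexp (v * x) := by
    rcases le_or_gt 0 x with hx | hx
    · rw [abs_of_nonneg hx]
      have h3 : c * x + s * x ≤ v * x := by nlinarith
      calc rexp (c * x + s * x) ≤ rexp (v * x) := exp_le_exp.2 h3
        _ ≤ _ := le_add_of_nonneg_left (exp_nonneg _)
    · rw [abs_of_neg hx]
      have h3 : c * (-x) + s * x ≤ u * x := by nlinarith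
      calc rexp (c * (-x) + s * x) ≤ rexp (u * x) := exp_le_exp.2 h3
        _ ≤ _ := le_add_of_nonneg_right (exp_nonneg _)
  calc |x| ^ n * rexp (s * x)
      ≤ (n.factorial / c ^ n * rexp (c * |x|)) * rexp (s * x) :=
        mul_le_mul_of_nonneg_right hpow (exp_nonneg _)
    _ = n.factorial / c ^ n * rexp (c * |x| + s * x) := by rw [exp_add]; ring
    _ ≤ _ := mul_le_mul_of_nonneg_left hexp (by positivity)

lemma integrable_abs_pow_exp_s1 (Q₀ : Measure ℝ) (n : ℕ) {u v s : ℝ}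
    (hu : Integrable (fun x => rexp (u * x)) Q₀) (hv : Integrable (fun x => rexp (v * x)) Q₀)
    (h1 : u < s) (h2 : s < v) :
    Integrable (fun x => |x| ^ n * rexp (s * x)) Q₀ := by
  set c := min (s - u) (v - s) with hc_def
  have hc : 0 < c := lt_min (by linarith) (by linarith)
  have h1' : u ≤ s - c := by have := min_le_left (s - u) (v - s); linarith [this]
  have h2' : s + c ≤ v := by have := min_le_right (s - u) (v - s); linarith [this]
  have hbound : Integrable (fun x => (n.factorial / c ^ n : ℝ) *
      (rexp (u * x) + rexp (v * x))) Q₀ := by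
    simpa using (hu.add hv).const_mul ((n.factorial / c ^ n : ℝ))
  refine Integrable.mono' hbound ?_ ?_
  · exact (((continuous_abs.pow n).mul
      (Real.continuous_exp.comp (continuous_const.mul continuous_id)))).aestronglyMeasurable
  · refine Filter.Eventually.of_forall fun x => ?_
    rw [Real.norm_eq_abs, abs_of_nonneg (by positivity)]
    exact key_bound n hc h1' h2' x

lemma integrable_pow_exp_s1 (Q₀ : Measure ℝ) (n : ℕ) {u v s : ℝ}
    (hu : Integrable (fun x => rexp (u * x)) Q₀) (hv : Integrable (fun x => rexp (v * x)) Q₀)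
    (h1 : u < s) (h2 : s < v) :
    Integrable (fun x => x ^ n * rexp (s * x)) Q₀ := by
  refine Integrable.mono' (integrable_abs_pow_exp_s1 Q₀ n hu hv h1 h2) ?_ ?_
  · exact (((continuous_pow n).mul
      (Real.continuous_exp.comp (continuous_const.mul continuous_id)))).aestronglyMeasurable
  · refine Filter.Eventually.of_forall fun x => ?_
    rw [Real.norm_eq_abs, abs_mul, abs_pow, abs_of_nonneg (exp_nonneg _)]

lemma integrable_exp_of_between (Q₀ : Measure ℝ) {u v s : ℝ}
    (hu : Integrable (fun x => rexp (u * x)) Q₀) (hv : Integrable (fun x => rexp (v * x)) Q₀)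
    (h1 : u < s) (h2 : s < v) :
    Integrable (fun x => rexp (s * x)) Q₀ := by
  have := integrable_pow_exp_s1 Q₀ 0 hu hv h1 h2
  simpa using this

lemma hasDerivAt_moment (Q₀ : Measure ℝ) (n : ℕ) {u v t : ℝ}
    (hu : Integrable (fun x => rexp (u * x)) Q₀) (hv : Integrable (fun x => rexp (v * x)) Q₀)
    (h1 : u < t) (h2 : t < v) :
    HasDerivAt (fun s => ∫ x, x ^ n * rexp (s * x) ∂Q₀)
      (∫ x, x ^ (n + 1) * rexp (t * x) ∂Q₀) t := by
  set ε := min (t - u) (v - t) / 2 with hε_def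
  have hε : 0 < ε := by
    have := lt_min (sub_pos.2 h1) (sub_pos.2 h2)
    positivity
  have hεu : u ≤ t - 2 * ε := by
    have := min_le_left (t - u) (v - t); rw [hε_def]; linarith
  have hεv : t + 2 * ε ≤ v := by
    have := min_le_right (t - u) (v - t); rw [hε_def]; linarith
  have key := hasDerivAt_integral_of_dominated_loc_of_deriv_le (μ := Q₀)
    (F := fun s x => x ^ n * rexp (s * x))
    (F' := fun s x => x ^ (n + 1) * rexp (s * x))
    (bound := fun x => ((n+1).factorial / ε ^ (n+1) : ℝ) * (rexp (u * x) + rexp (v * x)))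
    (x₀ := t) (Metric.ball_mem_nhds t hε)
    (Filter.Eventually.of_forall fun s =>
      (((continuous_pow n).mul
        (Real.continuous_exp.comp (continuous_const.mul continuous_id)))).aestronglyMeasurable)
    (integrable_pow_exp_s1 Q₀ n hu hv h1 h2)
    (((continuous_pow (n+1)).mul
        (Real.continuous_exp.comp (continuous_const.mul continuous_id))).aestronglyMeasurable)
    ?_ ?_ ?_
  · exact key.2
  · refine Filter.Eventually.of_forall fun x => fun s hs => ?_
    rw [Metric.mem_ball, Real.dist_eq, abs_lt] at hs
    rw [Real.norm_eq_abs, abs_mul, abs_pow, abs_of_nonneg (exp_nonneg _)]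
    exact key_bound (n+1) hε (by linarith [hs.1, hs.2]) (by linarith [hs.1, hs.2]) x
  · simpa using (hu.add hv).const_mul (((n+1).factorial / ε ^ (n+1) : ℝ))
  · refine Filter.Eventually.of_forall fun x => fun s _ => ?_
    have h := ((hasDerivAt_mul_const x).exp).const_mul (x ^ n)
      (x := s)
    refine h.congr_deriv ?_
    simp only [pow_succ]; ring

lemma taylor_two {f f' f'' : ℝ → ℝ} {a b : ℝ}
    (hf : ∀ x ∈ Set.Icc (min a b) (max a b), HasDerivAt f (f' x) x)
    (hf' : ∀ x ∈ Set.Icc (min a b) (max a b), HasDerivAt f' (f'' x) x) :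
    ∃ γ ∈ Set.Icc (min a b) (max a b),
      f b - f a - f' a * (b - a) = f'' γ / 2 * (b - a) ^ 2 := by
  rcases eq_or_ne a b with rfl | hab
  · exact ⟨a, by simp, by simp⟩
  have hba : (b - a) ^ 2 ≠ 0 := pow_ne_zero _ (sub_ne_zero.2 (Ne.symm hab))
  set M := (f b - f a - f' a * (b - a)) * 2 / (b - a) ^ 2 with hM_def
  set F := fun x => f b - f x - f' x * (b - x) - M / 2 * (b - x) ^ 2 with hF_def
  have hFa : F a = 0 := by
    rw [hF_def, hM_def]; field_simp; ring
  have hFb : F b = 0 := by simp [hF_def]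
  have hF' : ∀ x ∈ Set.Icc (min a b) (max a b),
      HasDerivAt F ((M - f'' x) * (b - x)) x := by
    intro x hx
    have hb : HasDerivAt (fun y => b - y) (-1) x := (hasDerivAt_id x).const_sub b
    have hA : HasDerivAt (fun y => f' y * (b - y)) (f'' x * (b - x) + f' x * (-1)) x :=
      (hf' x hx).mul hb
    have hB : HasDerivAt (fun y => M / 2 * (b - y) ^ 2)
        (M / 2 * ((2 : ℕ) * (b - x) ^ 1 * (-1))) x := (hb.pow 2).const_mul (M / 2)
    have h := (((hf x hx).const_sub (f b)).sub hA).sub hB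
    refine h.congr_deriv ?_
    push_cast
    ring
  -- Rolle via MVT
  have key : ∃ c, c ∈ Set.Ioo (min a b) (max a b) ∧ (M - f'' c) * (b - c) = 0 := by
    rcases hab.lt_or_gt with h | h
    · rw [min_eq_left h.le, max_eq_right h.le] at hF' ⊢
      have hcont : ContinuousOn F (Set.Icc a b) := fun x hx =>
        (hF' x hx).continuousAt.continuousWithinAt
      obtain ⟨c, hc, hceq⟩ := exists_hasDerivAt_eq_slope F (fun x => (M - f'' x) * (b - x)) h
        hcont (fun x hx => hF' x ⟨hx.1.le, hx.2.le⟩)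
      exact ⟨c, hc, by rw [hceq, hFa, hFb]; simp⟩
    · rw [min_eq_right h.le, max_eq_left h.le] at hF' ⊢
      have hcont : ContinuousOn F (Set.Icc b a) := fun x hx =>
        (hF' x hx).continuousAt.continuousWithinAt
      obtain ⟨c, hc, hceq⟩ := exists_hasDerivAt_eq_slope F (fun x => (M - f'' x) * (b - x)) h
        hcont (fun x hx => hF' x ⟨hx.1.le, hx.2.le⟩)
      exact ⟨c, hc, by rw [hceq, hFa, hFb]; simp⟩
  obtain ⟨c, hc, hceq⟩ := key
  have hcb : b - c ≠ 0 := by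
    rcases hab.lt_or_gt with h | h
    · rw [min_eq_left h.le, max_eq_right h.le] at hc
      exact sub_ne_zero.2 (hc.2.ne')
    · rw [min_eq_right h.le, max_eq_left h.le] at hc
      exact sub_ne_zero.2 (hc.1.ne)
  have hfc : f'' c = M := by
    rcases mul_eq_zero.1 hceq with h | h
    · linarith [sub_eq_zero.1 h]
    · exact absurd h hcb
  refine ⟨c, Set.mem_Icc_of_Ioo hc, ?_⟩
  rw [hfc, hM_def]
  field_simp

theorem stmt_1
    (Q₀ : Measure ℝ) [IsProbabilityMeasure Q₀]
    (Γ : Set ℝ) (hΓopen : IsOpen Γ) (hΓconn : Γ.OrdConnected)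
    (hZ : ∀ β ∈ Γ, Integrable (fun x => Real.exp (β * x)) Q₀)
    (Q : ℝ → Measure ℝ)
    (hQ : ∀ β ∈ Γ, Q β = Q₀.withDensity (fun x =>
      ENNReal.ofReal (Real.exp (β * x) / ∫ y, Real.exp (β * y) ∂Q₀)))
    (α β : ℝ) (hα : α ∈ Γ) (hβ : β ∈ Γ) :
    ∃ γ ∈ Set.Icc (min α β) (max α β),
      klDiv (Q α) (Q β) =
        ((variance id (Q γ) / 2 * (α - β) ^ 2 : ℝ) : EReal) := by
  classical
  -- endpoints of the interval in Γ
  have hm : min α β ∈ Γ := by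
    rcases le_total α β with h | h
    · simpa [min_eq_left h] using hα
    · simpa [min_eq_right h] using hβ
  have hM : max α β ∈ Γ := by
    rcases le_total α β with h | h
    · simpa [max_eq_right h] using hβ
    · simpa [max_eq_left h] using hα
  -- choose u < min and max < v inside Γ
  obtain ⟨εu, hεu, hballu⟩ := Metric.isOpen_iff.1 hΓopen _ hm
  obtain ⟨εv, hεv, hballv⟩ := Metric.isOpen_iff.1 hΓopen _ hM
  set u := min α β - εu / 2 with hu_def
  set v := max α β + εv / 2 with hv_def
  have hu : u ∈ Γ := hballu (by
    simp only [Metric.mem_ball, Real.dist_eq, hu_def]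
    rw [abs_of_nonpos (by linarith)]
    linarith)
  have hv : v ∈ Γ := hballv (by
    simp only [Metric.mem_ball, Real.dist_eq, hv_def]
    rw [abs_of_nonneg (by linarith)]
    linarith)
  have hum : u < min α β := by rw [hu_def]; linarith
  have hMv : max α β < v := by rw [hv_def]; linarith
  have hIu : Integrable (fun x => rexp (u * x)) Q₀ := hZ u hu
  have hIv : Integrable (fun x => rexp (v * x)) Q₀ := hZ v hv
  have hmem : ∀ t ∈ Set.Icc (min α β) (max α β), u < t ∧ t < v := fun t ht =>
    ⟨lt_of_lt_of_le hum ht.1, lt_of_le_of_lt ht.2 hMv⟩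
  have hαuv : u < α ∧ α < v := hmem α ⟨min_le_left _ _, le_max_left _ _⟩
  have hβuv : u < β ∧ β < v := hmem β ⟨min_le_right _ _, le_max_right _ _⟩
  -- notation
  set W : ℝ → ℝ := fun s => ∫ x, rexp (s * x) ∂Q₀ with hW_def
  have hWpos : ∀ t, u < t → t < v → 0 < W t := fun t h1 h2 =>
    integral_exp_pos (integrable_exp_of_between Q₀ hIu hIv h1 h2)
  have hdW : ∀ t, u < t → t < v →
      HasDerivAt W (∫ x, x * rexp (t * x) ∂Q₀) t := by
    intro t h1 h2
    have := hasDerivAt_moment Q₀ 0 hIu hIv h1 h2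
    simpa [hW_def] using this
  have hdZ1 : ∀ t, u < t → t < v →
      HasDerivAt (fun s => ∫ x, x * rexp (s * x) ∂Q₀) (∫ x, x ^ 2 * rexp (t * x) ∂Q₀) t := by
    intro t h1 h2
    have := hasDerivAt_moment Q₀ 1 hIu hIv h1 h2
    simpa using this
  -- the cumulant generating function and its derivatives
  set f : ℝ → ℝ := fun s => Real.log (W s) with hf_def
  set g1 : ℝ → ℝ := fun s => (∫ x, x * rexp (s * x) ∂Q₀) / W s with hg1_def
  set g2 : ℝ → ℝ := fun s =>
    ((∫ x, x ^ 2 * rexp (s * x) ∂Q₀) * W s -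
      (∫ x, x * rexp (s * x) ∂Q₀) * (∫ x, x * rexp (s * x) ∂Q₀)) / W s ^ 2 with hg2_def
  have hf' : ∀ t ∈ Set.Icc (min α β) (max α β), HasDerivAt f (g1 t) t := by
    intro t ht
    obtain ⟨h1, h2⟩ := hmem t ht
    exact (hdW t h1 h2).log (hWpos t h1 h2).ne'
  have hf'' : ∀ t ∈ Set.Icc (min α β) (max α β), HasDerivAt g1 (g2 t) t := by
    intro t ht
    obtain ⟨h1, h2⟩ := hmem t ht
    exact (hdZ1 t h1 h2).div (hdW t h1 h2) (hWpos t h1 h2).ne'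
  obtain ⟨γ, hγIcc, hTay⟩ := taylor_two hf' hf''
  have hγΓ : γ ∈ Γ := hΓconn.out hm hM hγIcc
  obtain ⟨hγ1, hγ2⟩ := hmem γ hγIcc
  -- tilted description
  have hQt : ∀ δ, δ ∈ Γ → Q δ = Q₀.tilted (fun x => δ * x) := by
    intro δ hδ
    rw [hQ δ hδ]
    rfl
  haveI hPα : IsProbabilityMeasure (Q α) := by
    rw [hQt α hα]; exact isProbabilityMeasure_tilted (hZ α hα)
  haveI hPβ : IsProbabilityMeasure (Q β) := by
    rw [hQt β hβ]; exact isProbabilityMeasure_tilted (hZ β hβ)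
  haveI hPγ : IsProbabilityMeasure (Q γ) := by
    rw [hQt γ hγΓ]; exact isProbabilityMeasure_tilted (hZ γ hγΓ)
  -- transfer of integrability to tilted measures
  have hQint : ∀ δ : ℝ, ∀ g : ℝ → ℝ, Continuous g →
      Integrable (fun x => rexp (δ * x) * g x) Q₀ →
      Integrable g (Q₀.tilted (fun x => δ * x)) := by
    intro δ g hg hint
    rw [Measure.tilted, integrable_withDensity_iff
      (f := fun x => ENNReal.ofReal (rexp (δ * x) / ∫ x, rexp (δ * x) ∂Q₀))
      (((Real.continuous_exp.comp (continuous_const.mul continuous_id)).div_const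
        _).measurable.ennreal_ofReal)
      (Filter.Eventually.of_forall fun x => ENNReal.ofReal_lt_top)]
    refine (hint.div_const (∫ x, rexp (δ * x) ∂Q₀)).congr
      (Filter.Eventually.of_forall fun x => ?_)
    have htr : (ENNReal.ofReal (rexp (δ * x) / ∫ x, rexp (δ * x) ∂Q₀)).toReal
        = rexp (δ * x) / ∫ x, rexp (δ * x) ∂Q₀ :=
      ENNReal.toReal_ofReal (div_nonneg (exp_nonneg _)
        (integral_nonneg fun x => exp_nonneg _))
    simp only [htr]
    ring
  -- integral identity on tilted measures
  have hQeq : ∀ δ : ℝ, ∀ g : ℝ → ℝ,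
      ∫ x, g x ∂(Q₀.tilted (fun x => δ * x)) = (∫ x, rexp (δ * x) * g x ∂Q₀) / W δ := by
    intro δ g
    rw [integral_tilted]
    simp_rw [smul_eq_mul, div_mul_eq_mul_div]
    rw [integral_div]
  -- basic integrabilities
  have hIα1 : Integrable (fun x => rexp (α * x) * x) Q₀ := by
    have := integrable_pow_exp_s1 Q₀ 1 hIu hIv hαuv.1 hαuv.2
    simpa [mul_comm] using this
  have hid : Integrable (fun x => x) (Q α) := by
    rw [hQt α hα]
    exact hQint α _ continuous_id hIα1
  -- Q β as a tilt of Q α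
  have hsum : (fun x => α * x) + (fun x => (β - α) * x) = fun x => β * x := by
    funext x; simp only [Pi.add_apply]; ring
  have hgβα : Q β = (Q α).tilted (fun x => (β - α) * x) := by
    rw [hQt α hα, hQt β hβ, tilted_tilted (hZ α hα), hsum]
  have hexpg : Integrable (fun x => rexp ((β - α) * x)) (Q α) := by
    rw [hQt α hα]
    refine hQint α _ (Real.continuous_exp.comp (continuous_const.mul continuous_id)) ?_
    have heq : (fun x => rexp (α * x) * rexp ((β - α) * x)) = fun x => rexp (β * x) := by
      funext x; rw [← Real.exp_add]; ring_nf
    rw [heq]; exact hZ β hβ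
  have hCpos : 0 < ∫ x, rexp ((β - α) * x) ∂(Q α) := integral_exp_pos hexpg
  have hCval : ∫ x, rexp ((β - α) * x) ∂(Q α) = W β / W α := by
    rw [hQt α hα]
    have := integral_exp_tilted (μ := Q₀) (fun x => α * x) (fun x => (β - α) * x)
    rw [this, hsum]
  -- the log-density
  have hlog : (fun x => Real.log ((Q α).rnDeriv (Q β) x).toReal)
      =ᵐ[Q α] fun x => (α - β) * x + (Real.log (W β) - Real.log (W α)) := by
    rw [hgβα]
    filter_upwards [rnDeriv_tilted_right (Q α) (Q α) hexpg,
      Measure.rnDeriv_self (Q α)] with x hx hx1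
    rw [hx, hx1, mul_one, ENNReal.toReal_ofReal (by positivity),
      Real.log_mul (Real.exp_ne_zero _) hCpos.ne', Real.log_exp, hCval,
      Real.log_div (hWpos β hβuv.1 hβuv.2).ne' (hWpos α hαuv.1 hαuv.2).ne']
    ring
  have hintlog : Integrable (fun x => (α - β) * x + (Real.log (W β) - Real.log (W α)))
      (Q α) := (hid.const_mul (α - β)).add (integrable_const _)
  have hint : Integrable (fun x => Real.log ((Q α).rnDeriv (Q β) x).toReal) (Q α) :=
    hintlog.congr hlog.symm
  have hac : Q α ≪ Q β := by
    rw [hQt α hα, hQt β hβ]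
    exact (tilted_absolutelyContinuous Q₀ _).trans
      (absolutelyContinuous_tilted (hZ β hβ))
  -- value of the mean of Q α
  have hidval : ∫ x, x ∂(Q α) = (∫ x, x * rexp (α * x) ∂Q₀) / W α := by
    rw [hQt α hα, hQeq α]
    simp_rw [mul_comm]
  -- KL value
  have hKL : ∫ x, Real.log ((Q α).rnDeriv (Q β) x).toReal ∂(Q α)
      = (α - β) * g1 α + (Real.log (W β) - Real.log (W α)) := by
    rw [integral_congr_ae hlog, integral_add (hid.const_mul (α - β)) (integrable_const _),
      integral_const, probReal_univ, integral_const_mul, hidval]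
    simp [hg1_def]
  -- variance of Q γ
  have hIγ1 : Integrable (fun x => rexp (γ * x) * x) Q₀ := by
    have := integrable_pow_exp_s1 Q₀ 1 hIu hIv hγ1 hγ2
    simpa [mul_comm] using this
  have hIγ2 : Integrable (fun x => rexp (γ * x) * x ^ 2) Q₀ := by
    have := integrable_pow_exp_s1 Q₀ 2 hIu hIv hγ1 hγ2
    simpa [mul_comm] using this
  have hMem : MemLp (id : ℝ → ℝ) 2 (Q γ) := by
    rw [memLp_two_iff_integrable_sq aestronglyMeasurable_id, hQt γ hγΓ]
    exact hQint γ _ (continuous_pow 2) hIγ2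
  have hmom1 : ∫ x, x ∂(Q γ) = (∫ x, x * rexp (γ * x) ∂Q₀) / W γ := by
    rw [hQt γ hγΓ, hQeq γ]
    simp_rw [mul_comm]
  have hmom2 : ∫ x, x ^ 2 ∂(Q γ) = (∫ x, x ^ 2 * rexp (γ * x) ∂Q₀) / W γ := by
    rw [hQt γ hγΓ, hQeq γ]
    simp_rw [mul_comm]
  have hvar : variance id (Q γ) = g2 γ := by
    rw [variance_eq_sub hMem]
    have h2 : (Q γ)[(id : ℝ → ℝ) ^ 2] = ∫ x, x ^ 2 ∂(Q γ) := by
      congr 1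
    have h1 : (Q γ)[(id : ℝ → ℝ)] = ∫ x, x ∂(Q γ) := rfl
    rw [h2, h1, hmom1, hmom2, hg2_def]
    have := (hWpos γ hγ1 hγ2).ne'
    beta_reduce
    generalize (∫ x, x ^ 2 * rexp (γ * x) ∂Q₀) = A
    generalize (∫ x, x * rexp (γ * x) ∂Q₀) = B
    field_simp
  -- conclude
  refine ⟨γ, hγIcc, ?_⟩
  rw [klDiv, if_pos ⟨hac, hint⟩]
  norm_cast
  rw [hKL, hvar]
  have hsq : (β - α) ^ 2 = (α - β) ^ 2 := by ring
  have hTay' : f β - f α - g1 α * (β - α) = g2 γ / 2 * (α - β) ^ 2 := by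
    rw [← hsq]; exact hTay
  simp only [hf_def] at hTay'
  linarith [hTay']
end

section
/- Let Q₀ be a probability measure on ℝ, not a point mass, and let Γ be an open interval of parameters β for which Z(β) = ∫ exp(βx) dQ₀(x) < ∞; for β ∈ Γ let Q_β be the probability measure with dQ_β/dQ₀ = exp(βx)/Z(β), with mean μ_β and variance σ²_β. If the variance is nondecreasing along the family, i.e. σ²_s ≤ σ²_t whenever s ≤ t in Γ, then for all α ≤ β in Γ, D(Q_α‖Q_β) ≥ (μ_α − μ_β)² / (2 σ²_β). -/
open MeasureTheory ProbabilityTheory Real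

open Set
set_option linter.unusedSectionVars false
set_option linter.unusedVariables false

lemma kl_helper_bound (n : ℕ) (δ s t x : ℝ) (hδ : 0 < δ) (hs : |s - t| ≤ δ) :
    |x| ^ n * exp (s * x) ≤
      (1 / δ ^ n) * (exp ((t + (n + 1) * δ) * x) + exp ((t - (n + 1) * δ) * x)) := by
  have h1 : |x| ^ n ≤ (1 / δ ^ n) * exp ((n : ℝ) * (δ * |x|)) := by
    have h0 : δ * |x| ≤ exp (δ * |x|) := by
      nlinarith [Real.add_one_le_exp (δ * |x|)]
    have : |x| ≤ (1 / δ) * exp (δ * |x|) := by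
      rw [one_div, ← div_eq_inv_mul, le_div_iff₀ hδ]
      linarith [h0]
    calc |x| ^ n ≤ ((1 / δ) * exp (δ * |x|)) ^ n := by
          exact pow_le_pow_left₀ (abs_nonneg x) this n
      _ = (1 / δ ^ n) * exp ((n : ℝ) * (δ * |x|)) := by
          rw [mul_pow, ← Real.exp_nat_mul, div_pow, one_pow]
  have h2 : exp (s * x) ≤ exp (t * x + δ * |x|) := by
    apply Real.exp_le_exp.2
    have : (s - t) * x ≤ δ * |x| := by
      calc (s - t) * x ≤ |(s - t) * x| := le_abs_self _
        _ = |s - t| * |x| := abs_mul _ _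
        _ ≤ δ * |x| := by gcongr
    nlinarith
  have h3 : exp ((n : ℝ) * (δ * |x|)) * exp (t * x + δ * |x|)
      ≤ exp ((t + (n + 1) * δ) * x) + exp ((t - (n + 1) * δ) * x) := by
    rw [← Real.exp_add]
    rcases abs_cases x with ⟨h, _⟩ | ⟨h, _⟩
    · rw [h]
      refine le_add_of_le_of_nonneg (le_of_eq ?_) (Real.exp_nonneg _)
      congr 1
      ring
    · rw [h]
      refine le_add_of_nonneg_of_le (Real.exp_nonneg _) (le_of_eq ?_)
      congr 1
      ring
  calc |x| ^ n * exp (s * x) ≤ ((1 / δ ^ n) * exp ((n : ℝ) * (δ * |x|))) * exp (t * x + δ * |x|) := by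
        apply mul_le_mul h1 h2 (Real.exp_nonneg _)
        positivity
    _ = (1 / δ ^ n) * (exp ((n : ℝ) * (δ * |x|)) * exp (t * x + δ * |x|)) := by ring
    _ ≤ _ := by gcongr

noncomputable def klZ (Q₀ : Measure ℝ) (t : ℝ) : ℝ := ∫ x, exp (t * x) ∂Q₀
noncomputable def klZ1 (Q₀ : Measure ℝ) (t : ℝ) : ℝ := ∫ x, x * exp (t * x) ∂Q₀
noncomputable def klZ2 (Q₀ : Measure ℝ) (t : ℝ) : ℝ := ∫ x, x ^ 2 * exp (t * x) ∂Q₀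

variable {Q₀ : Measure ℝ} [IsProbabilityMeasure Q₀] {Γ : Set ℝ}

lemma kl_deriv_aux (hΓ : IsOpen Γ)
    (hZ : ∀ β ∈ Γ, Integrable (fun x => Real.exp (β * x)) Q₀) {t : ℝ} (ht : t ∈ Γ) :
    (Integrable (fun x => x * exp (t * x)) Q₀ ∧ HasDerivAt (klZ Q₀) (klZ1 Q₀ t) t)
    ∧ (Integrable (fun x => x ^ 2 * exp (t * x)) Q₀ ∧ HasDerivAt (klZ1 Q₀) (klZ2 Q₀ t) t) := by
  obtain ⟨ε, hε, hball⟩ := Metric.isOpen_iff.1 hΓ t ht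
  set δ : ℝ := ε / 8 with hδdef
  have hδ : 0 < δ := by positivity
  have hmem : ∀ c : ℝ, |c| ≤ 3 * δ → t + c ∈ Γ := by
    intro c hc
    apply hball
    simp only [Metric.mem_ball, Real.dist_eq, add_sub_cancel_left]
    calc |c| ≤ 3 * δ := hc
      _ < ε := by rw [hδdef]; linarith
  -- integrable bound functions
  have hBint : ∀ n : ℕ, n ≤ 2 → Integrable
      (fun x => (1 / δ ^ n) * (exp ((t + (n + 1) * δ) * x) + exp ((t - (n + 1) * δ) * x))) Q₀ := by
    intro n hn
    have h1 : t + (n + 1) * δ ∈ Γ := by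
      apply hmem
      rw [abs_of_nonneg (by positivity)]
      have : ((n : ℝ) + 1) ≤ 3 := by
        have : (n : ℝ) ≤ 2 := by exact_mod_cast hn
        linarith
      nlinarith
    have h2 : t - (n + 1) * δ ∈ Γ := by
      have := hmem (-((n + 1) * δ)) (by
        rw [abs_neg, abs_of_nonneg (by positivity)]
        have : (n : ℝ) ≤ 2 := by exact_mod_cast hn
        nlinarith)
      simpa [sub_eq_add_neg] using this
    exact ((hZ _ h1).add (hZ _ h2)).const_mul _
  -- measurability
  have hmeas : ∀ s : ℝ, AEStronglyMeasurable (fun x => exp (s * x)) Q₀ :=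
    fun s => (measurable_exp.comp (measurable_const.mul measurable_id)).aestronglyMeasurable
  have hmeas1 : ∀ s : ℝ, AEStronglyMeasurable (fun x => x * exp (s * x)) Q₀ :=
    fun s => (measurable_id.mul (measurable_exp.comp
      (measurable_const.mul measurable_id))).aestronglyMeasurable
  constructor
  · -- first derivative
    have := hasDerivAt_integral_of_dominated_loc_of_deriv_le (F := fun s x => exp (s * x))
      (F' := fun s x => x * exp (s * x)) (x₀ := t)
      (bound := fun x => (1 / δ ^ 1) * (exp ((t + (1 + 1) * δ) * x) + exp ((t - (1 + 1) * δ) * x)))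
      (μ := Q₀) (Metric.ball_mem_nhds t hδ)
      (Filter.Eventually.of_forall fun s => hmeas s) (hZ t ht) (hmeas1 t)
      ?_ (by simpa using hBint 1 one_le_two) ?_
    · exact ⟨this.1, this.2⟩
    · refine Filter.Eventually.of_forall fun x => fun s hs => ?_
      have hb := kl_helper_bound 1 δ s t x hδ (by
        rw [Metric.mem_ball, Real.dist_eq] at hs; exact hs.le)
      calc ‖x * exp (s * x)‖ = |x| ^ 1 * exp (s * x) := by
            rw [norm_mul, Real.norm_eq_abs, Real.norm_eq_abs, abs_exp, pow_one]
        _ ≤ _ := by simpa using hb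
    · refine Filter.Eventually.of_forall fun x => fun s hs => ?_
      have h := ((hasDerivAt_id s).mul_const x).exp
      simpa [mul_comm] using h
  · -- second derivative
    have := hasDerivAt_integral_of_dominated_loc_of_deriv_le (F := fun s x => x * exp (s * x))
      (F' := fun s x => x ^ 2 * exp (s * x)) (x₀ := t)
      (bound := fun x => (1 / δ ^ 2) * (exp ((t + (2 + 1) * δ) * x) + exp ((t - (2 + 1) * δ) * x)))
      (μ := Q₀) (Metric.ball_mem_nhds t hδ)
      (Filter.Eventually.of_forall fun s => hmeas1 s) ?_ ?_
      ?_ (by simpa using hBint 2 le_rfl) ?_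
    · exact ⟨this.1, this.2⟩
    · -- Integrable (fun x => x * exp (t*x))
      have hb := hBint 1 one_le_two
      refine hb.mono (hmeas1 t) (Filter.Eventually.of_forall fun x => ?_)
      have h := kl_helper_bound 1 δ t t x hδ (by simp [hδ.le])
      calc ‖x * exp (t * x)‖ = |x| ^ 1 * exp (t * x) := by
            rw [norm_mul, Real.norm_eq_abs, Real.norm_eq_abs, abs_exp, pow_one]
        _ ≤ _ := h.trans ((le_abs_self _).trans_eq (Real.norm_eq_abs _).symm)
    · exact (measurable_id.pow_const 2 |>.mul (measurable_exp.comp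
        (measurable_const.mul measurable_id))).aestronglyMeasurable
    · refine Filter.Eventually.of_forall fun x => fun s hs => ?_
      have hb := kl_helper_bound 2 δ s t x hδ (by
        rw [Metric.mem_ball, Real.dist_eq] at hs; exact hs.le)
      calc ‖x ^ 2 * exp (s * x)‖ = |x| ^ 2 * exp (s * x) := by
            rw [norm_mul, Real.norm_eq_abs, Real.norm_eq_abs, abs_exp, abs_pow, sq_abs]
        _ ≤ _ := by simpa using hb
    · refine Filter.Eventually.of_forall fun x => fun s hs => ?_
      have h := (((hasDerivAt_id s).mul_const x).exp).const_mul x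
      refine h.congr_deriv ?_
      simp only [id]
      ring



lemma klZ_pos {t : ℝ} (hint : Integrable (fun x => Real.exp (t * x)) Q₀) : 0 < klZ Q₀ t :=
  integral_exp_pos hint

lemma kl_integrable_tilted {t : ℝ} (hint : Integrable (fun x => Real.exp (t * x)) Q₀)
    {g : ℝ → ℝ} (hg : Measurable g)
    (hgi : Integrable (fun x => g x * exp (t * x)) Q₀) :
    Integrable g (Q₀.tilted (fun x => t * x)) := by
  rw [Measure.tilted, integrable_withDensity_iff (by fun_prop)
    (Filter.Eventually.of_forall fun x => ENNReal.ofReal_lt_top)]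
  have hZpos : 0 < klZ Q₀ t := klZ_pos hint
  have : (fun x => g x * (ENNReal.ofReal (exp (t * x) / ∫ y, exp (t * y) ∂Q₀)).toReal)
      = fun x => (1 / klZ Q₀ t) * (g x * exp (t * x)) := by
    ext x
    rw [ENNReal.toReal_ofReal (by positivity)]
    unfold klZ
    ring
  rw [this]
  exact hgi.const_mul _

lemma kl_integral_tilted {t : ℝ} (hint : Integrable (fun x => Real.exp (t * x)) Q₀)
    (g : ℝ → ℝ) :
    ∫ x, g x ∂(Q₀.tilted (fun x => t * x)) = (∫ x, g x * exp (t * x) ∂Q₀) / klZ Q₀ t := by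
  rw [integral_tilted]
  have : ∀ x : ℝ, (exp (t * x) / ∫ y, exp (t * y) ∂Q₀) • g x
      = (1 / klZ Q₀ t) * (g x * exp (t * x)) := by
    intro x
    rw [smul_eq_mul]
    unfold klZ
    ring
  simp_rw [this]
  rw [integral_const_mul]
  ring

lemma kl_mean_tilted {t : ℝ} (hint : Integrable (fun x => Real.exp (t * x)) Q₀) :
    ∫ x, x ∂(Q₀.tilted (fun x => t * x)) = klZ1 Q₀ t / klZ Q₀ t := by
  rw [kl_integral_tilted hint]; rfl

lemma kl_variance_tilted {t : ℝ} (hint : Integrable (fun x => Real.exp (t * x)) Q₀)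
    (hint2 : Integrable (fun x => x ^ 2 * exp (t * x)) Q₀) :
    variance id (Q₀.tilted (fun x => t * x))
      = klZ2 Q₀ t / klZ Q₀ t - (klZ1 Q₀ t / klZ Q₀ t) ^ 2 := by
  have : IsProbabilityMeasure (Q₀.tilted (fun x => t * x)) :=
    isProbabilityMeasure_tilted hint
  have hsq : Integrable (fun x : ℝ => x ^ 2) (Q₀.tilted (fun x => t * x)) :=
    kl_integrable_tilted hint (by fun_prop) hint2
  have hmem : MemLp (id : ℝ → ℝ) 2 (Q₀.tilted (fun x => t * x)) :=
    (memLp_two_iff_integrable_sq aestronglyMeasurable_id).2 (by simpa using hsq)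
  rw [variance_eq_sub hmem]
  have h1 : (∫ x, (id ^ 2 : ℝ → ℝ) x ∂(Q₀.tilted (fun x => t * x))) = klZ2 Q₀ t / klZ Q₀ t := by
    simp only [Pi.pow_apply, id_eq]
    rw [kl_integral_tilted hint]; rfl
  have h2 : (∫ x, id x ∂(Q₀.tilted (fun x => t * x))) = klZ1 Q₀ t / klZ Q₀ t := by
    simpa using kl_mean_tilted hint
  rw [h1, h2]



lemma kl_value {Q₀ : Measure ℝ} [IsProbabilityMeasure Q₀] {α β : ℝ}
    (hiα : Integrable (fun x => Real.exp (α * x)) Q₀)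
    (hiβ : Integrable (fun x => Real.exp (β * x)) Q₀)
    (hi1α : Integrable (fun x => x * exp (α * x)) Q₀) :
    klDiv (Q₀.tilted (fun x => α * x)) (Q₀.tilted (fun x => β * x))
      = (((α - β) * (klZ1 Q₀ α / klZ Q₀ α) + (log (klZ Q₀ β) - log (klZ Q₀ α)) : ℝ) : EReal) := by
  set Qβ := Q₀.tilted (fun x => β * x) with hQβ
  have hprobβ : IsProbabilityMeasure Qβ := isProbabilityMeasure_tilted hiβ
  have htt : Q₀.tilted (fun x => α * x) = Qβ.tilted (fun x => (α - β) * x) := by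
    rw [hQβ, tilted_tilted hiβ]
    congr 1
    ext x
    simp only [Pi.add_apply]
    ring
  -- integrability of exp((α-β)x) under Qβ
  have hiexp : Integrable (fun x => exp ((α - β) * x)) Qβ := by
    refine kl_integrable_tilted hiβ (by fun_prop) ?_
    refine hiα.congr ?_
    refine Filter.Eventually.of_forall fun x => ?_
    simp only [← Real.exp_add]
    congr 1
    ring
  have hC : (∫ x, exp ((α - β) * x) ∂Qβ) = klZ Q₀ α / klZ Q₀ β := by
    rw [hQβ, integral_exp_tilted]
    unfold klZ
    congr 1
    apply integral_congr_ae
    refine Filter.Eventually.of_forall fun x => ?_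
    simp only [Pi.add_apply]
    congr 1
    ring
  have hac : Q₀.tilted (fun x => α * x) ≪ Qβ := by
    rw [htt]; exact tilted_absolutelyContinuous _ _
  have hlog : (fun x => log (((Q₀.tilted (fun x => α * x)).rnDeriv Qβ x).toReal))
      =ᵐ[Qβ] fun x => (α - β) * x - (log (klZ Q₀ α) - log (klZ Q₀ β)) := by
    have h := log_rnDeriv_tilted_left_self (μ := Qβ) (f := fun x => (α - β) * x) hiexp
    rw [← htt] at h
    refine h.trans ?_
    rw [hC, Real.log_div (klZ_pos hiα).ne' (klZ_pos hiβ).ne']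
  have hlogα : (fun x => log (((Q₀.tilted (fun x => α * x)).rnDeriv Qβ x).toReal))
      =ᵐ[Q₀.tilted (fun x => α * x)] fun x => (α - β) * x - (log (klZ Q₀ α) - log (klZ Q₀ β)) :=
    hac.ae_le hlog
  have hidα : Integrable (fun x : ℝ => x) (Q₀.tilted (fun x => α * x)) :=
    kl_integrable_tilted hiα measurable_id hi1α
  have hint' : Integrable (fun x => (α - β) * x - (log (klZ Q₀ α) - log (klZ Q₀ β)))
      (Q₀.tilted (fun x => α * x)) :=
    (hidα.const_mul (α - β)).sub (integrable_const _)
  have hint : Integrable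
      (fun x => log (((Q₀.tilted (fun x => α * x)).rnDeriv Qβ x).toReal))
      (Q₀.tilted (fun x => α * x)) := hint'.congr hlogα.symm
  rw [klDiv, if_pos ⟨hac, hint⟩]
  norm_cast
  rw [integral_congr_ae hlogα]
  have hprobα : IsProbabilityMeasure (Q₀.tilted (fun x => α * x)) :=
    isProbabilityMeasure_tilted hiα
  rw [integral_sub (hidα.const_mul (α - β)) (integrable_const _), integral_const,
    integral_const_mul, kl_mean_tilted hiα]
  simp
  ring

/-- If `ψ' ≤ φ'` on `[a,b]` then `ψ b - ψ a ≤ φ b - φ a`. -/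
lemma kl_deriv_compare {φ ψ φ' ψ' : ℝ → ℝ} {a b : ℝ} (hab : a ≤ b)
    (hφ : ∀ t ∈ Icc a b, HasDerivAt φ (φ' t) t)
    (hψ : ∀ t ∈ Icc a b, HasDerivAt ψ (ψ' t) t)
    (h : ∀ t ∈ Icc a b, ψ' t ≤ φ' t) :
    ψ b - ψ a ≤ φ b - φ a := by
  have hmono : MonotoneOn (fun t => φ t - ψ t) (Icc a b) := by
    apply monotoneOn_of_deriv_nonneg (convex_Icc a b)
    · exact fun t ht => ((hφ t ht).sub (hψ t ht)).continuousAt.continuousWithinAt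
    · intro t ht
      rw [interior_Icc] at ht
      exact (((hφ t (Ioo_subset_Icc_self ht)).sub
        (hψ t (Ioo_subset_Icc_self ht))).differentiableAt).differentiableWithinAt
    · intro t ht
      rw [interior_Icc] at ht
      rw [show deriv (fun t => φ t - ψ t) t = φ' t - ψ' t from
        ((hφ t (Ioo_subset_Icc_self ht)).sub (hψ t (Ioo_subset_Icc_self ht))).deriv]
      have := h t (Ioo_subset_Icc_self ht)
      linarith
  have := hmono (left_mem_Icc.2 hab) (right_mem_Icc.2 hab) hab
  simp only at this
  linarith

/-- Key real inequality. -/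
lemma kl_key_ineq {Λ g v : ℝ → ℝ} {a b M : ℝ} (hab : a ≤ b) (hM : 0 ≤ M)
    (hΛ : ∀ t ∈ Icc a b, HasDerivAt Λ (g t) t)
    (hg : ∀ t ∈ Icc a b, HasDerivAt g (v t) t)
    (hv0 : ∀ t ∈ Icc a b, 0 ≤ v t)
    (hvM : ∀ t ∈ Icc a b, v t ≤ M) :
    (g a - g b) ^ 2 / (2 * M) ≤ (a - b) * g a + (Λ b - Λ a) := by
  -- g is monotone on [a,b]
  have hgmono : ∀ s ∈ Icc a b, ∀ t ∈ Icc a b, s ≤ t → g s ≤ g t := by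
    intro s hs t ht hst
    have := kl_deriv_compare (φ := g) (ψ := fun _ => (0 : ℝ)) (φ' := v)
      (ψ' := fun _ => (0 : ℝ)) hst
      (fun u hu => hg u ⟨le_trans hs.1 hu.1, le_trans hu.2 ht.2⟩)
      (fun u _ => hasDerivAt_const u 0)
      (fun u hu => hv0 u ⟨le_trans hs.1 hu.1, le_trans hu.2 ht.2⟩)
    simpa using this
  -- g b - g u ≤ M * (b - u)
  have hLip : ∀ u ∈ Icc a b, g b - g u ≤ M * (b - u) := by
    intro u hu
    have := kl_deriv_compare (φ := fun t => M * t) (ψ := g) (φ' := fun _ => M) (ψ' := v)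
      hu.2
      (fun s _ => by simpa using (hasDerivAt_id s).const_mul M)
      (fun s hs => hg s ⟨le_trans hu.1 hs.1, hs.2⟩)
      (fun s hs => hvM s ⟨le_trans hu.1 hs.1, hs.2⟩)
    nlinarith [this]
  obtain ⟨Δ, hΔ⟩ : ∃ D : ℝ, D = g b - g a := ⟨_, rfl⟩
  have hΔ0 : 0 ≤ Δ := by
    have := hgmono a (left_mem_Icc.2 hab) b (right_mem_Icc.2 hab) hab
    linarith
  -- the function φ(u) = Λ u - g a * u is monotone on [a,b]
  have hφmono : ∀ s ∈ Icc a b, ∀ t ∈ Icc a b, s ≤ t → Λ s - g a * s ≤ Λ t - g a * t := by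
    intro s hs t ht hst
    have := kl_deriv_compare (φ := fun u => Λ u - g a * u) (ψ := fun _ => (0 : ℝ))
      (φ' := fun u => g u - g a) (ψ' := fun _ => (0 : ℝ)) hst
      (fun u hu => by
        simpa [Pi.sub_def] using (hΛ u ⟨le_trans hs.1 hu.1, le_trans hu.2 ht.2⟩).sub
          ((hasDerivAt_id u).const_mul (g a)))
      (fun u _ => hasDerivAt_const u 0)
      (fun u hu => by
        have := hgmono a (left_mem_Icc.2 hab) u ⟨le_trans hs.1 hu.1, le_trans hu.2 ht.2⟩
          (le_trans hs.1 hu.1)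
        simpa using sub_nonneg.2 this)
    simpa using this
  rcases eq_or_lt_of_le hM with hM0 | hMpos
  · -- M = 0 : Δ = 0 and RHS ≥ 0
    have hΔle : Δ ≤ 0 := by
      have := hLip a (left_mem_Icc.2 hab)
      rw [← hM0] at this
      simpa [hΔ] using this
    have : Δ = 0 := le_antisymm hΔle hΔ0
    have hga : g a = g b := by simp only [hΔ] at this; linarith
    rw [hga, sub_self]
    have := hφmono a (left_mem_Icc.2 hab) b (right_mem_Icc.2 hab) hab
    have h0 : (0:ℝ) ^ 2 / (2 * M) = 0 := by simp
    rw [h0]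
    nlinarith [this]
  · -- M > 0
    obtain ⟨c, hc⟩ : ∃ c : ℝ, c = b - Δ / M := ⟨_, rfl⟩
    have hcb : c ≤ b := by
      have : 0 ≤ Δ / M := div_nonneg hΔ0 hMpos.le
      simp only [hc]; linarith
    have hac : a ≤ c := by
      have h1 := hLip a (left_mem_Icc.2 hab)
      have h2 : Δ / M ≤ b - a := by
        rw [div_le_iff₀ hMpos]
        nlinarith
      rw [hc]
      linarith
    have hcI : c ∈ Icc a b := ⟨hac, hcb⟩
    -- Step 1 : φ c - φ a ≥ 0
    have hstep1 : Λ a - g a * a ≤ Λ c - g a * c :=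
      hφmono a (left_mem_Icc.2 hab) c hcI hac
    -- Step 2 : φ b - φ c ≥ χ b - χ c
    have hstep2 := kl_deriv_compare (φ := fun u => Λ u - g a * u)
      (ψ := fun u => (Δ - M * b) * u + M / 2 * u ^ 2)
      (φ' := fun u => g u - g a) (ψ' := fun u => (Δ - M * b) + M * u) hcb
      (fun u hu => by
        simpa [Pi.sub_def] using (hΛ u ⟨le_trans hac hu.1, hu.2⟩).sub
          ((hasDerivAt_id u).const_mul (g a)))
      (fun u hu => by
        have h1 : HasDerivAt (fun u : ℝ => (Δ - M * b) * u) (Δ - M * b) u := by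
          simpa using (hasDerivAt_id u).const_mul (Δ - M * b)
        have h2 : HasDerivAt (fun u : ℝ => M / 2 * u ^ 2) (M * u) u := by
          have := (hasDerivAt_pow 2 u).const_mul (M / 2)
          refine this.congr_deriv ?_
          ring
        simpa [Pi.add_def] using h1.add h2)
      (fun u hu => by
        have := hLip u ⟨le_trans hac hu.1, hu.2⟩
        simp only [hΔ]
        nlinarith)
    have hbc : b - c = Δ / M := by rw [hc]; ring
    have hχ : ((Δ - M * b) * b + M / 2 * b ^ 2) - ((Δ - M * b) * c + M / 2 * c ^ 2)
        = Δ ^ 2 / (2 * M) := by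
      rw [hc]
      field_simp
      ring
    have hsq : (g a - g b) ^ 2 = Δ ^ 2 := by rw [hΔ]; ring
    rw [hsq]
    have hfinal : Δ ^ 2 / (2 * M) ≤ Λ b - g a * b - (Λ c - g a * c) := hχ ▸ hstep2
    have hexp : (a - b) * g a = g a * a - g a * b := by ring
    linarith [hstep1, hfinal]

theorem stmt_2
    (Q₀ : Measure ℝ) [IsProbabilityMeasure Q₀]
    (hQ₀ : ∀ c : ℝ, Q₀ ≠ Measure.dirac c)
    (Γ : Set ℝ) (hΓopen : IsOpen Γ) (hΓconn : Γ.OrdConnected)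
    (hZ : ∀ β ∈ Γ, Integrable (fun x => Real.exp (β * x)) Q₀)
    (Q : ℝ → Measure ℝ)
    (hQ : ∀ β ∈ Γ, Q β = Q₀.withDensity (fun x =>
      ENNReal.ofReal (Real.exp (β * x) / ∫ y, Real.exp (β * y) ∂Q₀)))
    (μ : ℝ → ℝ) (hμ : ∀ β ∈ Γ, μ β = ∫ x, x ∂(Q β))
    (hmono : ∀ s ∈ Γ, ∀ t ∈ Γ, s ≤ t → variance id (Q s) ≤ variance id (Q t))
    (α β : ℝ) (hα : α ∈ Γ) (hβ : β ∈ Γ) (hαβ : α ≤ β) :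
    (((μ α - μ β) ^ 2 / (2 * variance id (Q β)) : ℝ) : EReal) ≤ klDiv (Q α) (Q β) := by
  have hIcc : Icc α β ⊆ Γ := fun t ht => hΓconn.out hα hβ ht
  have hQt : ∀ t ∈ Γ, Q t = Q₀.tilted (fun x => t * x) := by
    intro t ht
    rw [hQ t ht]
    rfl
  -- mean and variance formulas
  have hmean : ∀ t ∈ Γ, μ t = klZ1 Q₀ t / klZ Q₀ t := by
    intro t ht
    rw [hμ t ht, hQt t ht, kl_mean_tilted (hZ t ht)]
  have hvar : ∀ t ∈ Γ, variance id (Q t) = klZ2 Q₀ t / klZ Q₀ t - (klZ1 Q₀ t / klZ Q₀ t) ^ 2 := by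
    intro t ht
    rw [hQt t ht, kl_variance_tilted (hZ t ht) ((kl_deriv_aux hΓopen hZ ht).2.1)]
  -- derivatives
  have hΛderiv : ∀ t ∈ Icc α β,
      HasDerivAt (fun s => Real.log (klZ Q₀ s)) (klZ1 Q₀ t / klZ Q₀ t) t := by
    intro t ht
    exact ((kl_deriv_aux hΓopen hZ (hIcc ht)).1.2).log (klZ_pos (hZ t (hIcc ht))).ne'
  have hGderiv : ∀ t ∈ Icc α β,
      HasDerivAt (fun s => klZ1 Q₀ s / klZ Q₀ s)
        (klZ2 Q₀ t / klZ Q₀ t - (klZ1 Q₀ t / klZ Q₀ t) ^ 2) t := by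
    intro t ht
    have hz := (kl_deriv_aux hΓopen hZ (hIcc ht)).1.2
    have hz1 := (kl_deriv_aux hΓopen hZ (hIcc ht)).2.2
    have hne := (klZ_pos (hZ t (hIcc ht))).ne'
    have := hz1.div hz hne
    refine this.congr_deriv ?_
    field_simp
  set M : ℝ := variance id (Q β) with hMdef
  have hM0 : 0 ≤ M := variance_nonneg _ _
  have hvarIcc : ∀ t ∈ Icc α β,
      klZ2 Q₀ t / klZ Q₀ t - (klZ1 Q₀ t / klZ Q₀ t) ^ 2 = variance id (Q t) :=
    fun t ht => (hvar t (hIcc ht)).symm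
  -- the key inequality
  have hkey := kl_key_ineq (Λ := fun s => Real.log (klZ Q₀ s))
    (g := fun s => klZ1 Q₀ s / klZ Q₀ s)
    (v := fun t => klZ2 Q₀ t / klZ Q₀ t - (klZ1 Q₀ t / klZ Q₀ t) ^ 2)
    hαβ hM0 hΛderiv hGderiv
    (fun t ht => by
      show 0 ≤ klZ2 Q₀ t / klZ Q₀ t - (klZ1 Q₀ t / klZ Q₀ t) ^ 2
      rw [hvarIcc t ht]; exact variance_nonneg _ _)
    (fun t ht => by
      show klZ2 Q₀ t / klZ Q₀ t - (klZ1 Q₀ t / klZ Q₀ t) ^ 2 ≤ M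
      rw [hvarIcc t ht, hMdef]
      exact hmono t (hIcc ht) β hβ ht.2)
  -- KL value
  have hkl : klDiv (Q α) (Q β)
      = (((α - β) * (klZ1 Q₀ α / klZ Q₀ α)
          + (Real.log (klZ Q₀ β) - Real.log (klZ Q₀ α)) : ℝ) : EReal) := by
    rw [hQt α hα, hQt β hβ]
    exact kl_value (hZ α hα) (hZ β hβ) (kl_deriv_aux hΓopen hZ hα).1.1
  rw [hkl]
  rw [EReal.coe_le_coe_iff]
  rw [hmean α hα, hmean β hβ]
  simpa using hkey
end

section
/- Let Φ denote the standard Gaussian distribution N(0,1) on ℝ. For every probability measure P on ℝ with finite second moment whose variance v := Var(P) satisfies v ≤ 1, one has D(P‖Φ) ≥ (v − 1)²/6. -/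
open MeasureTheory ProbabilityTheory Real
open scoped ENNReal NNReal

lemma aux_mul_log (t : ℝ) (ht : 0 ≤ t) : t - 1 ≤ t * Real.log t := by
  rcases eq_or_lt_of_le ht with h | h
  · simp [← h]
  · have h1 : Real.log t⁻¹ ≤ t⁻¹ - 1 := Real.log_le_sub_one_of_pos (by positivity)
    rw [Real.log_inv] at h1
    have h2 : t * (-Real.log t) ≤ t * (t⁻¹ - 1) := mul_le_mul_of_nonneg_left h1 ht
    rw [mul_sub, mul_inv_cancel₀ h.ne'] at h2
    nlinarith

lemma aux_log_le {v : ℝ} (hv0 : 0 < v) (hv1 : v ≤ 1) :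
    Real.log v ≤ (v - 1) - (v - 1) ^ 2 / 3 := by
  have hu1 : (-1 : ℝ) < v - 1 := by linarith
  have hu2 : v - 1 ≤ 0 := by linarith
  have h3 : (0:ℝ) ≤ 1 + ((v - 1) - (v - 1) ^ 2 / 3) / 3 := by nlinarith [sq_nonneg (v - 1)]
  have hexp : (1 + ((v - 1) - (v - 1) ^ 2 / 3) / 3) ^ 3
      ≤ Real.exp ((v - 1) - (v - 1) ^ 2 / 3) := by
    have h1 : 1 + ((v - 1) - (v - 1) ^ 2 / 3) / 3 ≤ Real.exp (((v - 1) - (v - 1) ^ 2 / 3) / 3) :=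
      by linarith [Real.add_one_le_exp (((v - 1) - (v - 1) ^ 2 / 3) / 3)]
    calc (1 + ((v - 1) - (v - 1) ^ 2 / 3) / 3) ^ 3
        ≤ Real.exp (((v - 1) - (v - 1) ^ 2 / 3) / 3) ^ 3 := pow_le_pow_left₀ h3 h1 3
      _ = Real.exp ((v - 1) - (v - 1) ^ 2 / 3) := by
          rw [← Real.exp_nat_mul]; ring_nf
  have hA : (0:ℝ) ≤ -(v-1)^3 := by nlinarith
  have hB : (0:ℝ) ≤ 135 - 9*(v-1)^2 + (v-1)^3 := by nlinarith [sq_nonneg (v-1)]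
  have hpoly : v ≤ (1 + ((v - 1) - (v - 1) ^ 2 / 3) / 3) ^ 3 := by nlinarith [mul_nonneg hA hB]
  exact (Real.log_le_iff_le_exp hv0).2 (hpoly.trans hexp)

lemma aux_key {v : ℝ} (hv0 : 0 < v) (hv1 : v ≤ 1) :
    (v - 1) ^ 2 / 6 ≤ (v - 1 - Real.log v) / 2 := by
  have := aux_log_le hv0 hv1
  nlinarith

theorem stmt_4
    (P : Measure ℝ) [IsProbabilityMeasure P]
    (hint : Integrable (fun x => x ^ 2) P)
    (hv : variance id P ≤ 1) :
    (((variance id P - 1) ^ 2 / 6 : ℝ) : EReal) ≤ klDiv P (gaussianReal 0 1) := by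
  unfold klDiv
  split_ifs with h
  swap
  · exact le_top
  obtain ⟨hPΦ, hInt⟩ := h
  rw [EReal.coe_le_coe_iff]
  -- moment facts
  have hMem : MemLp (id : ℝ → ℝ) 2 P :=
    (memLp_two_iff_integrable_sq aestronglyMeasurable_id).2 (by simpa using hint)
  have hm1 : Integrable (fun x => x) P := by
    exact hMem.integrable one_le_two
  have hvar : variance id P = (∫ x, x ^ 2 ∂P) - (∫ x, x ∂P) ^ 2 := by
    simpa using variance_eq_sub hMem
  set m : ℝ := ∫ x, x ∂P with hm
  set M2 : ℝ := ∫ x, x ^ 2 ∂P with hM2def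
  set v : ℝ := variance id P with hvv
  have hv_nonneg : 0 ≤ v := variance_nonneg _ _
  have hΦvol : gaussianReal 0 1 ≪ (volume : Measure ℝ) :=
    gaussianReal_absolutelyContinuous 0 one_ne_zero
  -- variance is positive (else P is a Dirac mass, contradicting P ≪ Φ)
  have hv0 : 0 < v := by
    rcases hv_nonneg.eq_or_lt with h0 | h0
    · exfalso
      have heq : (fun x : ℝ => (x - m)^2) = fun x => x^2 + (-2*m)*x + m^2 := by
        funext x; ring
      have hsq : Integrable (fun x => (x - m)^2) P := by
        rw [heq]; exact (hint.add (hm1.const_mul _)).add (integrable_const _)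
      have hveq := variance_eq_integral (μ := P) measurable_id.aemeasurable
      rw [← hvv, ← h0] at hveq
      have hzero : ∫ x, (x - m)^2 ∂P = 0 := by
        rw [hm]
        symm
        simpa using hveq
      have hae := (integral_eq_zero_iff_of_nonneg (fun x => sq_nonneg _) hsq).1 hzero
      have hae' : ∀ᵐ x ∂P, x = m := by
        filter_upwards [hae] with x hx
        have hx' : (x - m)^2 = 0 := hx
        nlinarith [sq_nonneg (x - m)]
      have hcomp : P {m}ᶜ = 0 := by
        have hset : {x : ℝ | ¬ x = m} = {m}ᶜ := by ext x; simp
        rw [ae_iff, hset] at hae'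
        exact hae'
      have hPm : P {m} = 0 := (hPΦ.trans hΦvol) (Real.volume_singleton)
      have : (1 : ℝ≥0∞) ≤ 0 := by
        calc (1 : ℝ≥0∞) = P Set.univ := measure_univ.symm
          _ = P ({m} ∪ {m}ᶜ) := by rw [Set.union_compl_self]
          _ ≤ P {m} + P {m}ᶜ := measure_union_le _ _
          _ = 0 := by rw [hPm, hcomp, add_zero]
      simp at this
    · exact h0
  set w : ℝ≥0 := ⟨v, hv_nonneg⟩ with hwdef
  have hwv : (w : ℝ) = v := rfl
  have hw : w ≠ 0 := by
    intro hcon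
    rw [← NNReal.coe_eq_zero] at hcon
    rw [hwv] at hcon
    exact hv0.ne' hcon
  set G : Measure ℝ := gaussianReal m w with hGdef
  have hGvol : G ≪ volume := gaussianReal_absolutelyContinuous m hw
  have hvolG : (volume : Measure ℝ) ≪ G := gaussianReal_absolutelyContinuous' m hw
  have hvolΦ : (volume : Measure ℝ) ≪ gaussianReal 0 1 :=
    gaussianReal_absolutelyContinuous' 0 one_ne_zero
  have hPG : P ≪ G := hPΦ.trans (hΦvol.trans hvolG)
  set g : ℝ → ℝ := fun x =>
    Real.log (gaussianPDFReal m w x) - Real.log (gaussianPDFReal 0 1 x) with hgdef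
  set LG : ℝ → ℝ := fun x => Real.log ((P.rnDeriv G x).toReal) with hLGdef
  have hπ : (0:ℝ) < 2 * π := by positivity
  -- formula for g
  have hg : ∀ x, g x = ((-(Real.log v)/2 - m^2/(2*v)) + (m/v) * x) + (1/2 - 1/(2*v)) * x^2 := by
    intro x
    have h2πv : (0:ℝ) < 2 * π * (w:ℝ) := by rw [hwv]; exact mul_pos hπ hv0
    have l1 : Real.log (gaussianPDFReal m w x)
        = -(Real.log (2*π) + Real.log v)/2 - (x-m)^2/(2*v) := by
      rw [gaussianPDFReal]
      rw [Real.log_mul (inv_ne_zero (Real.sqrt_pos.2 h2πv).ne') (Real.exp_ne_zero _),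
        Real.log_exp, Real.log_inv, Real.log_sqrt h2πv.le, hwv,
        Real.log_mul hπ.ne' hv0.ne']
      ring
    have l2 : Real.log (gaussianPDFReal 0 1 x)
        = -(Real.log (2*π))/2 - x^2/2 := by
      rw [gaussianPDFReal]
      rw [Real.log_mul (by positivity) (Real.exp_ne_zero _), Real.log_exp,
        Real.log_inv, Real.log_sqrt (by positivity)]
      push_cast
      rw [mul_one]
      ring
    simp only [hgdef]
    rw [l1, l2]
    field_simp
    ring
  have I1 : Integrable (fun x : ℝ => (-(Real.log v)/2 - m^2/(2*v)) + (m/v) * x) P :=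
    (integrable_const _).add (hm1.const_mul _)
  have I2 : Integrable (fun x : ℝ => (1/2 - 1/(2*v)) * x^2) P := hint.const_mul _
  have hintg : Integrable g P := by
    have hge : g = fun x => ((-(Real.log v)/2 - m^2/(2*v)) + (m/v) * x) + (1/2 - 1/(2*v)) * x^2 :=
      funext hg
    rw [hge]
    exact I1.add I2
  have hgint : ∫ x, g x ∂P = -(Real.log v)/2 + M2/2 - 1/2 := by
    have e1 : ∫ x, g x ∂P
        = ((-(Real.log v)/2 - m^2/(2*v)) + (m/v) * m) + (1/2 - 1/(2*v)) * M2 := by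
      rw [funext hg, integral_add I1 I2,
        integral_add (integrable_const _) (hm1.const_mul _),
        integral_const_mul, integral_const_mul, integral_const]
      simp only [probReal_univ, measure_univ, ENNReal.toReal_one, smul_eq_mul, one_mul, ← hm, ← hM2def]
    rw [e1]
    have hm2 : m^2 = M2 - v := by rw [hvv] at hvar ⊢; linarith [hvar]
    have hv' : v ≠ 0 := hv0.ne'
    field_simp
    linear_combination hm2
  -- key a.e. identity
  have hmul1 := Measure.rnDeriv_mul_rnDeriv (κ := gaussianReal 0 1) hPG
  have hmul2 := Measure.rnDeriv_mul_rnDeriv (κ := gaussianReal 0 1) hGvol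
  have hinv := Measure.inv_rnDeriv hΦvol
  have hGd : G.rnDeriv volume =ᵐ[gaussianReal 0 1] gaussianPDF m w :=
    (rnDeriv_gaussianReal m w).filter_mono hΦvol.ae_le
  have hΦd : (gaussianReal 0 1).rnDeriv volume =ᵐ[gaussianReal 0 1] gaussianPDF 0 1 :=
    (rnDeriv_gaussianReal 0 1).filter_mono hΦvol.ae_le
  have key : ∀ᵐ x ∂P, Real.log ((P.rnDeriv (gaussianReal 0 1) x).toReal) = LG x + g x := by
    have H : ∀ᵐ x ∂(gaussianReal 0 1), P.rnDeriv (gaussianReal 0 1) x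
        = P.rnDeriv G x * (gaussianPDF m w x * (gaussianPDF 0 1 x)⁻¹) := by
      filter_upwards [hmul1, hmul2, hinv, hGd, hΦd] with x h1 h2 h3 h4 h5
      simp only [Pi.mul_apply] at h1 h2
      rw [← h1, ← h2, h4]
      congr 1
      rw [← h3, Pi.inv_apply, h5]
    filter_upwards [hPΦ.ae_le H, Measure.rnDeriv_pos hPG,
      (Measure.rnDeriv_lt_top P G).filter_mono hPG.ae_le] with x hx hxpos hxfin
    rw [hx]
    have hb := gaussianPDFReal_pos m w x hw
    have hc := gaussianPDFReal_pos 0 1 x one_ne_zero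
    have ha : 0 < (P.rnDeriv G x).toReal := ENNReal.toReal_pos hxpos.ne' hxfin.ne
    have e1 : (P.rnDeriv G x * (gaussianPDF m w x * (gaussianPDF 0 1 x)⁻¹)).toReal
        = (P.rnDeriv G x).toReal * (gaussianPDFReal m w x * (gaussianPDFReal 0 1 x)⁻¹) := by
      rw [gaussianPDF, gaussianPDF, ← ENNReal.ofReal_inv_of_pos hc, ENNReal.toReal_mul,
        ENNReal.toReal_mul, ENNReal.toReal_ofReal hb.le,
        ENNReal.toReal_ofReal (inv_nonneg.2 hc.le)]
    rw [e1, Real.log_mul ha.ne' (by positivity),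
      Real.log_mul hb.ne' (inv_ne_zero hc.ne'), Real.log_inv]
    simp only [hLGdef, hgdef]
    ring
  have hIntLG : Integrable LG P :=
    (hInt.sub hintg).congr (by filter_upwards [key] with x hx; simp only [Pi.sub_apply]; rw [hx]; ring)
  have hsplit : ∫ x, Real.log ((P.rnDeriv (gaussianReal 0 1) x).toReal) ∂P
      = (∫ x, LG x ∂P) + ∫ x, g x ∂P := by
    rw [← integral_add hIntLG hintg]
    exact integral_congr_ae (by filter_upwards [key] with x hx; rw [hx])
  have hLGnn : 0 ≤ ∫ x, LG x ∂P := by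
    rw [← integral_rnDeriv_smul hPG (f := LG)]
    have h1 : Integrable (fun x => (P.rnDeriv G x).toReal • LG x) G :=
      (integrable_rnDeriv_smul_iff hPG).2 hIntLG
    have h2 : Integrable (fun x => (P.rnDeriv G x).toReal - 1) G :=
      Measure.integrable_toReal_rnDeriv.sub (integrable_const 1)
    have h3 : ∫ x, ((P.rnDeriv G x).toReal - 1) ∂G = 0 := by
      rw [integral_sub Measure.integrable_toReal_rnDeriv (integrable_const 1),
        Measure.integral_toReal_rnDeriv hPG]
      simp
    have h4 : ∫ x, ((P.rnDeriv G x).toReal - 1) ∂G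
        ≤ ∫ x, (P.rnDeriv G x).toReal • LG x ∂G := by
      refine integral_mono h2 h1 fun x => ?_
      simp only [hLGdef, smul_eq_mul]
      exact aux_mul_log _ ENNReal.toReal_nonneg
    linarith [h3 ▸ h4]
  have hM2v : v ≤ M2 := by nlinarith [sq_nonneg m, hvar]
  have := aux_key hv0 hv
  rw [hsplit, hgint]
  linarith
end

section
/- Let α > −1 and θ > 0, and let m := (α+1)θ be the mean of the Gamma distribution Γ_{α+1,θ}. For every probability measure P on (0,∞) with finite first moment such that E := ∫ x dP(x) ≤ m, one has D(P‖Γ_{α+1,θ}) ≥ (α+1)·(E − m)² / (2 m²). -/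
open MeasureTheory ProbabilityTheory Real

/-- Gibbs' inequality: nonnegativity of the KL integral. -/
lemma aux_integral_llr_nonneg {Ω : Type*} [MeasurableSpace Ω] (μ ν : Measure Ω)
    [IsProbabilityMeasure μ] [IsProbabilityMeasure ν] (hμν : μ ≪ ν)
    (h_int : Integrable (llr μ ν) μ) : 0 ≤ ∫ x, llr μ ν x ∂μ := by
  have hpos : ∀ᵐ x ∂μ, 0 < μ.rnDeriv ν x := Measure.rnDeriv_pos hμν
  have hlt : ∀ᵐ x ∂μ, μ.rnDeriv ν x < ⊤ := hμν.ae_le (Measure.rnDeriv_lt_top μ ν)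
  set g : Ω → ℝ := fun x => ((μ.rnDeriv ν x).toReal)⁻¹ with hg
  have hgmeas : Measurable g := (Measure.measurable_rnDeriv μ ν).ennreal_toReal.inv
  have hgnn : 0 ≤ᵐ[μ] g := ae_of_all _ fun x => inv_nonneg.2 ENNReal.toReal_nonneg
  -- lintegral of the ennreal inverse is at most 1
  have hL : ∫⁻ x, (μ.rnDeriv ν x)⁻¹ ∂μ ≤ 1 := by
    obtain ⟨d, hdmeas, hd⟩ : ∃ d : Ω → ENNReal, Measurable d ∧ d = μ.rnDeriv ν :=
      ⟨μ.rnDeriv ν, Measure.measurable_rnDeriv μ ν, rfl⟩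
    rw [← hd]
    conv_lhs => rw [show μ = ν.withDensity d from hd ▸ (Measure.withDensity_rnDeriv_eq μ ν hμν).symm]
    rw [lintegral_withDensity_eq_lintegral_mul _ hdmeas (g := fun x => (d x)⁻¹) hdmeas.inv]
    calc ∫⁻ x, (d * fun x => (d x)⁻¹) x ∂ν
        ≤ ∫⁻ _, 1 ∂ν := lintegral_mono fun x => ENNReal.mul_inv_le_one _
      _ = 1 := by simp
  have hae : (fun x => ENNReal.ofReal (g x)) =ᵐ[μ] fun x => (μ.rnDeriv ν x)⁻¹ := by
    filter_upwards [hpos, hlt] with x hx hx'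
    simp only [hg]
    rw [← ENNReal.toReal_inv, ENNReal.ofReal_toReal]
    simp [hx.ne']
  have hLg : ∫⁻ x, ENNReal.ofReal (g x) ∂μ ≤ 1 := by
    rw [lintegral_congr_ae hae]; exact hL
  have hg_int : Integrable g μ := by
    refine ⟨hgmeas.aestronglyMeasurable, ?_⟩
    rw [hasFiniteIntegral_iff_ofReal hgnn]
    exact lt_of_le_of_lt hLg ENNReal.one_lt_top
  have hg_le : ∫ x, g x ∂μ ≤ 1 := by
    rw [integral_eq_lintegral_of_nonneg_ae hgnn hgmeas.aestronglyMeasurable]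
    calc (∫⁻ x, ENNReal.ofReal (g x) ∂μ).toReal ≤ (1 : ENNReal).toReal :=
          ENNReal.toReal_mono ENNReal.one_ne_top hLg
      _ = 1 := by simp
  have hpt : ∀ᵐ x ∂μ, 1 - g x ≤ llr μ ν x := by
    filter_upwards [hpos, hlt] with x hx hx'
    have ht : 0 < (μ.rnDeriv ν x).toReal := ENNReal.toReal_pos hx.ne' hx'.ne
    have := Real.log_le_sub_one_of_pos (inv_pos.2 ht)
    rw [Real.log_inv] at this
    have : 1 - ((μ.rnDeriv ν x).toReal)⁻¹ ≤ Real.log ((μ.rnDeriv ν x).toReal) := by linarith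
    exact this
  have hmono : ∫ x, (1 - g x) ∂μ ≤ ∫ x, llr μ ν x ∂μ :=
    integral_mono_ae ((integrable_const 1).sub hg_int) h_int hpt
  rw [integral_sub (integrable_const 1) hg_int, integral_const] at hmono
  simp only [measure_univ, probReal_univ, ENNReal.toReal_one, smul_eq_mul, one_mul, mul_one] at hmono
  linarith

/-- The key real inequality: `(x-1)²/2 ≤ x - 1 - log x` on `(0, 1]`. -/
lemma aux_quad_le_sub_log {x : ℝ} (hx : 0 < x) (hx1 : x ≤ 1) :
    (x - 1) ^ 2 / 2 ≤ x - 1 - Real.log x := by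
  have h0 : (0 : ℝ) ∉ Set.uIcc x 1 := by
    rw [Set.uIcc_of_le hx1]
    intro h
    exact absurd (Set.mem_Icc.mp h).1 (not_le.mpr hx)
  have hinv : IntervalIntegrable (fun s : ℝ => s⁻¹) volume x 1 :=
    intervalIntegrable_inv_iff.mpr (Or.inr h0)
  have h1 : ∫ s in x..1, (s⁻¹ - 1) = x - 1 - Real.log x := by
    rw [intervalIntegral.integral_sub hinv (intervalIntegrable_const),
      integral_inv h0, intervalIntegral.integral_const]
    rw [Real.log_div one_ne_zero hx.ne', Real.log_one]
    simp only [smul_eq_mul, mul_one]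
    ring
  have h2 : ∫ s in x..1, (1 - s) = (x - 1) ^ 2 / 2 := by
    rw [intervalIntegral.integral_sub (intervalIntegrable_const) intervalIntegral.intervalIntegrable_id,
      intervalIntegral.integral_const, integral_id]
    simp only [smul_eq_mul, mul_one]
    ring
  have h3 : ∫ s in x..1, (1 - s) ≤ ∫ s in x..1, (s⁻¹ - 1) := by
    refine intervalIntegral.integral_mono_on hx1
      ((intervalIntegrable_const).sub intervalIntegral.intervalIntegrable_id)
      (hinv.sub intervalIntegrable_const) fun s hs => ?_
    obtain ⟨hs1, hs2⟩ := Set.mem_Icc.mp hs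
    have hs0 : 0 < s := lt_of_lt_of_le hx hs1
    have hss : s * s⁻¹ = 1 := mul_inv_cancel₀ hs0.ne'
    have hexp : 0 ≤ (s - 1) ^ 2 * s⁻¹ := mul_nonneg (sq_nonneg _) (inv_pos.2 hs0).le
    nlinarith [hss, hexp, hs0]
  rw [h1, h2] at h3
  exact h3

theorem stmt_5
    (α θ : ℝ) (hα : -1 < α) (hθ : 0 < θ)
    (P : Measure ℝ) [IsProbabilityMeasure P] (hsupp : P (Set.Iic 0) = 0)
    (hint : Integrable (fun x => x) P)
    (hE : ∫ x, x ∂P ≤ (α + 1) * θ) :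
    (((α + 1) * ((∫ x, x ∂P) - (α + 1) * θ) ^ 2 / (2 * ((α + 1) * θ) ^ 2) : ℝ) : EReal)
      ≤ klDiv P (gammaMeasure (α + 1) θ⁻¹) := by
  classical
  set a : ℝ := α + 1 with ha_def
  have ha : 0 < a := by linarith
  set r : ℝ := θ⁻¹ with hr_def
  have hr : 0 < r := inv_pos.2 hθ
  set Q : Measure ℝ := gammaMeasure a r with hQ_def
  haveI hQprob : IsProbabilityMeasure Q := isProbabilityMeasure_gammaMeasure ha hr
  set E : ℝ := ∫ x, x ∂P with hE_def
  -- positivity of the mean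
  have haepos : ∀ᵐ x ∂P, 0 < x := by
    rw [ae_iff]
    convert hsupp using 2
    ext y; simp [not_lt]
  have hE0 : 0 < E := by
    rw [hE_def]
    rw [integral_pos_iff_support_of_nonneg_ae (by filter_upwards [haepos] with x hx; exact hx.le)
      hint]
    have h1 : (1 : ENNReal) ≤ P (Set.Ioi 0) := by
      have hm := measure_compl (μ := P) (s := Set.Ioi (0:ℝ)) measurableSet_Ioi
        (measure_ne_top P _)
      rw [Set.compl_Ioi, hsupp, measure_univ] at hm
      exact tsub_eq_zero_iff_le.mp hm.symm
    calc (0 : ENNReal) < 1 := by norm_num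
      _ ≤ P (Set.Ioi 0) := h1
      _ ≤ P (Function.support fun x : ℝ => x) := measure_mono fun y hy => ne_of_gt hy
  -- the tilt parameter
  set l : ℝ := a / E - r with hl_def
  have hl : 0 ≤ l := by
    rw [hl_def, sub_nonneg, hr_def, le_div_iff₀ hE0]
    calc θ⁻¹ * E ≤ θ⁻¹ * (a * θ) := mul_le_mul_of_nonneg_left hE (by positivity)
      _ = a := by field_simp
  have hrl : 0 < r + l := by
    rw [hl_def]
    have : r + (a / E - r) = a / E := by ring
    rw [this]
    positivity
  set f : ℝ → ℝ := fun x => -(l * x) with hf_def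
  set c : ℝ := (r / (r + l)) ^ a with hc_def
  have hc0 : 0 < c := by rw [hc_def]; exact Real.rpow_pos_of_pos (by positivity) _
  -- the lintegral computation of the Laplace transform of the Gamma measure
  have hmeas_exp : Measurable fun x : ℝ => Real.exp (f x) := by
    rw [hf_def]; fun_prop
  have hgpdf : ∀ b s : ℝ, Measurable (gammaPDF b s) := fun b s =>
    (measurable_gammaPDFReal b s).ennreal_ofReal
  have key : ∫⁻ x, ENNReal.ofReal (Real.exp (f x)) ∂Q = ENNReal.ofReal c := by
    rw [hQ_def, gammaMeasure,
      lintegral_withDensity_eq_lintegral_mul _ (hgpdf a r) hmeas_exp.ennreal_ofReal]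
    have heq : ∀ x : ℝ, (gammaPDF a r * fun x => ENNReal.ofReal (Real.exp (f x))) x
        = ENNReal.ofReal c * gammaPDF a (r + l) x := by
      intro x
      simp only [Pi.mul_apply]
      rcases le_or_gt 0 x with hx | hx
      · rw [gammaPDF_of_nonneg hx, gammaPDF_of_nonneg hx,
          ← ENNReal.ofReal_mul (by positivity), ← ENNReal.ofReal_mul hc0.le]
        congr 1
        have h1 : (r / (r + l)) ^ a * (r + l) ^ a = r ^ a := by
          rw [← Real.mul_rpow (by positivity) hrl.le, div_mul_cancel₀ _ hrl.ne']
        have h2 : Real.exp (-((r + l) * x)) = Real.exp (-(r * x)) * Real.exp (f x) := by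
          rw [hf_def, ← Real.exp_add]; ring_nf
        rw [hc_def, h2, ← h1]
        ring
      · rw [gammaPDF_of_neg hx, gammaPDF_of_neg hx, zero_mul, mul_zero]
    simp_rw [heq]
    rw [lintegral_const_mul _ (hgpdf a (r + l)),
      lintegral_gammaPDF_eq_one ha hrl, mul_one]
  have hfν : Integrable (fun x => Real.exp (f x)) Q := by
    refine ⟨hmeas_exp.aestronglyMeasurable, ?_⟩
    rw [hasFiniteIntegral_iff_ofReal (ae_of_all _ fun x => (Real.exp_pos _).le), key]
    exact ENNReal.ofReal_lt_top
  have hZ : ∫ x, Real.exp (f x) ∂Q = c := by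
    rw [integral_eq_lintegral_of_nonneg_ae (ae_of_all _ fun x => (Real.exp_pos _).le)
      hmeas_exp.aestronglyMeasurable, key, ENNReal.toReal_ofReal hc0.le]
  -- unfold klDiv and split
  rw [klDiv]
  split_ifs with h
  swap
  · exact le_top
  obtain ⟨hPQ, h_int⟩ := h
  rw [EReal.coe_le_coe_iff]
  have h_int' : Integrable (llr P Q) P := h_int
  have hfP : Integrable f P := by
    have := (hint.const_mul l).neg
    apply this.congr
    filter_upwards with x
    simp [hf_def]
  have hintf : ∫ x, f x ∂P = -(l * E) := by
    rw [hf_def]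
    rw [integral_neg]
    rw [MeasureTheory.integral_const_mul]
  -- tilted measure decomposition
  set ν' : Measure ℝ := Q.tilted f with hν'_def
  haveI : IsProbabilityMeasure ν' := isProbabilityMeasure_tilted hfν
  have hac' : P ≪ ν' := hPQ.trans (absolutelyContinuous_tilted hfν)
  have hint2 : Integrable (llr P ν') P :=
    integrable_llr_tilted_right hPQ hfP h_int' hfν
  have hdecomp := integral_llr_tilted_right hPQ hfP hfν h_int'
  have h0 := aux_integral_llr_nonneg P ν' hac' hint2
  rw [hdecomp, hintf, hZ] at h0
  -- arithmetic
  set m : ℝ := a * θ with hm_def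
  have hm0 : 0 < m := by positivity
  set x0 : ℝ := E / m with hx0_def
  have hx0pos : 0 < x0 := by positivity
  have hx0le : x0 ≤ 1 := by
    rw [hx0_def, div_le_one hm0, hm_def, ha_def]
    exact hE
  have hfrac : r / (r + l) = x0 := by
    rw [hl_def, hx0_def, hm_def, hr_def]
    have h1 : θ⁻¹ + (a / E - θ⁻¹) = a / E := by ring
    rw [h1]
    field_simp [hE0.ne', ha.ne', hθ.ne']
  have hlogc : Real.log c = a * Real.log x0 := by
    rw [hc_def, hfrac, Real.log_rpow hx0pos]
  have hlE : l * E = a - a * x0 := by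
    rw [hl_def, hx0_def, hm_def, hr_def]
    field_simp [hE0.ne', ha.ne', hθ.ne']
  -- so: 0 ≤ KL - (-(l*E)) + log c = KL + l*E + a * log x0
  rw [hlogc] at h0
  have hKL : a * (x0 - 1 - Real.log x0) ≤ ∫ x, llr P Q x ∂P := by
    have : a * (x0 - 1 - Real.log x0) = -(l * E) - a * Real.log x0 := by
      rw [hlE]; ring
    linarith
  have hquad := aux_quad_le_sub_log hx0pos hx0le
  clear_value a r E l m x0
  have hgoal : a * (E - m) ^ 2 / (2 * m ^ 2) = a * ((x0 - 1) ^ 2 / 2) := by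
    have hx1 : x0 - 1 = (E - m) / m := by rw [hx0_def, div_sub_one hm0.ne']
    rw [hx1, div_pow]
    ring
  have hfinal : a * (E - m) ^ 2 / (2 * m ^ 2) ≤ ∫ x, llr P Q x ∂P := by
    rw [hgoal]
    calc a * ((x0 - 1) ^ 2 / 2) ≤ a * (x0 - 1 - Real.log x0) :=
          mul_le_mul_of_nonneg_left hquad ha.le
      _ ≤ ∫ x, llr P Q x ∂P := hKL
  calc a * (E - m) ^ 2 / (2 * m ^ 2) ≤ ∫ x, llr P Q x ∂P := hfinal
    _ = ∫ ω, Real.log (P.rnDeriv Q ω).toReal ∂P := rfl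
end

section
/- Let n ≥ 1 and 0 < p < 1, and let bin(n,p) denote the binomial distribution on {0,1,…,n}. For every probability measure P on {0,1,…,n} with mean E := Σ_j j·P({j}), if either E ≤ np ≤ n/2 or E ≥ np ≥ n/2, then D(P‖bin(n,p)) ≥ (E − np)² / (2 n p (1−p)). In particular, for p = 1/2 the inequality D(P‖bin(n,1/2)) ≥ 2(E − n/2)²/n holds for every probability measure P on {0,1,…,n}. -/
open MeasureTheory ProbabilityTheory Real

/-- The binomial distribution on ℕ with parameters n and p, with point probabilities
C(n,j) p^j (1-p)^(n-j) for j = 0,…,n. -/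
noncomputable def binMeasure (n : ℕ) (p : ℝ) : Measure ℕ :=
  Measure.sum (fun j : ℕ =>
    ENNReal.ofReal ((n.choose j : ℝ) * p ^ j * (1 - p) ^ (n - j)) • Measure.dirac j)

section Aux
open Real

lemma psi_hasDeriv (p t : ℝ) :
    HasDerivAt (fun t => 1 + (1-p)*t - Real.exp t * (1 - p*t))
      ((1-p) - Real.exp t * (1 - p*t) + Real.exp t * p) t := by
  have h1 : HasDerivAt (fun t : ℝ => 1 + (1-p)*t) (1-p) t := by
    simpa using ((hasDerivAt_id t).const_mul (1-p)).const_add 1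
  have h2 : HasDerivAt (fun t : ℝ => Real.exp t * (1 - p*t)) 
      (Real.exp t * (1 - p*t) + Real.exp t * (-p)) t := by
    exact (Real.hasDerivAt_exp t).mul (by simpa using ((hasDerivAt_id t).const_mul p).const_sub 1)
  refine (h1.sub h2).congr_deriv ?_
  ring

lemma psi_deriv_nonneg (p t : ℝ) (hp0 : 0 ≤ p) (hp1 : p ≤ 1) (h : 0 ≤ (2*p - 1) * t) :
    0 ≤ (1-p) - Real.exp t * (1 - p*t) + Real.exp t * p := by
  have key : (1-p) * (1 - Real.exp (-t)) ≤ p * t := by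
    have h1 : 1 - Real.exp (-t) ≤ t := by
      nlinarith [Real.add_one_le_exp (-t)]
    have h2 : (1-p) * (1 - Real.exp (-t)) ≤ (1-p) * t ∨ (1-p) * (1 - Real.exp (-t)) ≤ p * t := by
      left
      exact mul_le_mul_of_nonneg_left h1 (by linarith)
    -- (1-p)*t ≤ p*t iff (2p-1)t ≥ 0
    have h3 : (1-p) * t ≤ p * t := by nlinarith
    rcases h2 with h2 | h2 <;> linarith
  have he : 0 < Real.exp t := Real.exp_pos t
  have : Real.exp t * ((1-p) * (1 - Real.exp (-t))) ≤ Real.exp t * (p * t) :=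
    mul_le_mul_of_nonneg_left key he.le
  have hee : Real.exp t * Real.exp (-t) = 1 := by
    rw [← Real.exp_add]; simp
  nlinarith

noncomputable def psiF (p t : ℝ) : ℝ := 1 + (1-p)*t - Real.exp t * (1 - p*t)
noncomputable def phiF (p t : ℝ) : ℝ := p*t + p*(1-p)*t^2/2 - Real.log (1-p+p*Real.exp t)

lemma denom_pos {p : ℝ} (hp0 : 0 < p) (hp1 : p < 1) (t : ℝ) : 0 < 1 - p + p * Real.exp t := by
  have := Real.exp_pos t; nlinarith

lemma phi_hasDeriv {p : ℝ} (hp0 : 0 < p) (hp1 : p < 1) (t : ℝ) :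
    HasDerivAt (phiF p) (p + p*(1-p)*t - p*Real.exp t/(1-p+p*Real.exp t)) t := by
  have hden := (denom_pos hp0 hp1 t).ne'
  have h1 : HasDerivAt (fun t : ℝ => p*t + p*(1-p)*t^2/2) (p + p*(1-p)*t) t := by
    have : HasDerivAt (fun t : ℝ => p*t + p*(1-p)*t^2/2) (p*1 + p*(1-p)*(2*t^1)/2) t := by
      exact (((hasDerivAt_id t).const_mul p).add
        (((hasDerivAt_pow 2 t).const_mul (p*(1-p))).div_const 2))
    convert this using 1; ring
  have h2 : HasDerivAt (fun t : ℝ => Real.log (1-p+p*Real.exp t))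
      ((p*Real.exp t)/(1-p+p*Real.exp t)) t := by
    have hu : HasDerivAt (fun t : ℝ => 1-p+p*Real.exp t) (p*Real.exp t) t :=
      ((Real.hasDerivAt_exp t).const_mul p).const_add (1-p)
    exact hu.log hden
  exact (h1.sub h2).congr_deriv (by ring)

lemma psi_zero (p : ℝ) : psiF p 0 = 0 := by simp [psiF]
lemma phi_zero (p : ℝ) : phiF p 0 = 0 := by simp [phiF]

lemma phi_deriv_eq {p : ℝ} (hp0 : 0 < p) (hp1 : p < 1) (t : ℝ) :
    deriv (phiF p) t = p * (1-p) * psiF p t / (1-p+p*Real.exp t) := by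
  rw [(phi_hasDeriv hp0 hp1 t).deriv]
  have hden := (denom_pos hp0 hp1 t).ne'
  field_simp [psiF]
  unfold psiF; ring

lemma psi_deriv_eq (p t : ℝ) :
    deriv (psiF p) t = (1-p) - Real.exp t * (1 - p*t) + Real.exp t * p :=
  (psi_hasDeriv p t).deriv

lemma mgf_bound {p : ℝ} (hp0 : 0 < p) (hp1 : p < 1) (l : ℝ)
    (h : (l ≤ 0 ∧ p ≤ 1/2) ∨ (0 ≤ l ∧ 1/2 ≤ p)) :
    Real.log (1-p+p*Real.exp l) ≤ p*l + p*(1-p)*l^2/2 := by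
  have hphi : ∀ t, HasDerivAt (phiF p) _ t := fun t => phi_hasDeriv hp0 hp1 t
  have hpsiDiff : Differentiable ℝ (psiF p) := fun t => (psi_hasDeriv p t).differentiableAt
  have hphiDiff : Differentiable ℝ (phiF p) := fun t => (phi_hasDeriv hp0 hp1 t).differentiableAt
  have key : 0 ≤ phiF p l := by
    rcases h with ⟨hl, hp⟩ | ⟨hl, hp⟩
    · -- l ≤ 0, p ≤ 1/2 : psi ≤ 0 on Iic 0, phi antitone on Iic 0
      have hpsiMono : MonotoneOn (psiF p) (Set.Iic 0) := by
        apply monotoneOn_of_deriv_nonneg (convex_Iic 0) hpsiDiff.continuous.continuousOn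
          hpsiDiff.differentiableOn
        intro x hx
        rw [interior_Iic] at hx
        rw [psi_deriv_eq]
        exact psi_deriv_nonneg p x hp0.le hp1.le (by nlinarith [hx.out])
      have hphiAnti : AntitoneOn (phiF p) (Set.Iic 0) := by
        apply antitoneOn_of_deriv_nonpos (convex_Iic 0) hphiDiff.continuous.continuousOn
          hphiDiff.differentiableOn
        intro x hx
        rw [interior_Iic] at hx
        rw [phi_deriv_eq hp0 hp1]
        have hψ : psiF p x ≤ 0 := by
          have := hpsiMono (Set.mem_Iic.2 hx.out.le) (Set.mem_Iic.2 le_rfl) hx.out.le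
          simpa [psi_zero] using this
        have hd := denom_pos hp0 hp1 x
        apply div_nonpos_of_nonpos_of_nonneg _ hd.le
        nlinarith [mul_nonneg (mul_nonneg hp0.le (sub_nonneg.2 hp1.le)) (neg_nonneg.2 hψ)]
      have := hphiAnti (Set.mem_Iic.2 hl) (Set.mem_Iic.2 le_rfl) hl
      simpa [phi_zero] using this
    · have hpsiMono : MonotoneOn (psiF p) (Set.Ici 0) := by
        apply monotoneOn_of_deriv_nonneg (convex_Ici 0) hpsiDiff.continuous.continuousOn
          hpsiDiff.differentiableOn
        intro x hx
        rw [interior_Ici] at hx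
        rw [psi_deriv_eq]
        exact psi_deriv_nonneg p x hp0.le hp1.le (by nlinarith [hx.out])
      have hphiMono : MonotoneOn (phiF p) (Set.Ici 0) := by
        apply monotoneOn_of_deriv_nonneg (convex_Ici 0) hphiDiff.continuous.continuousOn
          hphiDiff.differentiableOn
        intro x hx
        rw [interior_Ici] at hx
        rw [phi_deriv_eq hp0 hp1]
        have hψ : 0 ≤ psiF p x := by
          have := hpsiMono (Set.mem_Ici.2 le_rfl) (Set.mem_Ici.2 hx.out.le) hx.out.le
          simpa [psi_zero] using this
        have hd := denom_pos hp0 hp1 x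
        apply div_nonneg _ hd.le
        nlinarith [mul_nonneg (mul_nonneg hp0.le (sub_nonneg.2 hp1.le)) hψ]
      have := hphiMono (Set.mem_Ici.2 le_rfl) (Set.mem_Ici.2 hl) hl
      simpa [phi_zero] using this
  simp only [phiF] at key
  linarith

lemma gibbs_term {a r : ℝ} (ha : 0 ≤ a) (hr : 0 < r) : a - r ≤ a * Real.log (a / r) := by
  rcases eq_or_lt_of_le ha with h | h
  · simp [← h]; linarith
  · have hlog : Real.log (r / a) ≤ r / a - 1 := Real.log_le_sub_one_of_pos (div_pos hr h)
    have heq : Real.log (r/a) = - Real.log (a/r) := by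
      rw [← Real.log_inv]; congr 1; field_simp
    rw [heq] at hlog
    have h2 := mul_le_mul_of_nonneg_left hlog h.le
    have haa : a * (r/a - 1) = r - a := by field_simp
    nlinarith

lemma dv_bound (n : ℕ) {p : ℝ} (hp0 : 0 < p) (hp1 : p < 1) (a : ℕ → ℝ)
    (ha : ∀ j, 0 ≤ a j) (hsum : ∑ j ∈ Finset.range (n+1), a j = 1) (l : ℝ) :
    l * (∑ j ∈ Finset.range (n+1), (j:ℝ) * a j) - n * Real.log (1-p+p*Real.exp l)
      ≤ ∑ j ∈ Finset.range (n+1),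
          a j * Real.log (a j / ((n.choose j : ℝ) * p^j * (1-p)^(n-j))) := by
  set binj : ℕ → ℝ := fun j => (n.choose j : ℝ) * p^j * (1-p)^(n-j) with hbinj
  set Z : ℝ := (1-p+p*Real.exp l)^n with hZdef
  have hZpos : 0 < Z := pow_pos (denom_pos hp0 hp1 l) n
  have hbin_pos : ∀ j ∈ Finset.range (n+1), 0 < binj j := by
    intro j hj
    have hj' : j ≤ n := Nat.lt_succ_iff.mp (Finset.mem_range.mp hj)
    have : 0 < (n.choose j : ℝ) := by exact_mod_cast Nat.choose_pos hj'
    have h1 : 0 < p^j := pow_pos hp0 j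
    have h2 : 0 < (1-p)^(n-j) := pow_pos (by linarith) _
    positivity
  have hZ : Z = ∑ j ∈ Finset.range (n+1), binj j * Real.exp (l*j) := by
    rw [hZdef]
    have : 1-p+p*Real.exp l = p * Real.exp l + (1-p) := by ring
    rw [this, add_pow]
    apply Finset.sum_congr rfl
    intro j hj
    have : Real.exp (l * j) = (Real.exp l)^j := by
      rw [← Real.exp_nat_mul, mul_comm]
    rw [hbinj]
    simp only []
    rw [this, mul_pow]
    ring
  set r : ℕ → ℝ := fun j => binj j * Real.exp (l*j) / Z with hrdef
  have hrsum : ∑ j ∈ Finset.range (n+1), r j = 1 := by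
    rw [hrdef]
    simp only []
    rw [← Finset.sum_div, ← hZ, div_self hZpos.ne']
  have hterm : ∀ j ∈ Finset.range (n+1),
      a j * Real.log (a j / r j) + (l*j) * a j - Real.log Z * a j
        = a j * Real.log (a j / binj j) := by
    intro j hj
    rcases eq_or_lt_of_le (ha j) with h | h
    · simp [← h]
    · have hb := hbin_pos j hj
      have hrj : 0 < r j := div_pos (mul_pos hb (Real.exp_pos _)) hZpos
      have key : Real.log (a j / binj j) = Real.log (a j / r j) + (l*j - Real.log Z) := by
        have hsplit : a j / binj j = (a j / r j) * (Real.exp (l*j) / Z) := by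
          rw [hrdef]; simp only []
          field_simp
        rw [hsplit, Real.log_mul (by positivity) (by positivity),
          Real.log_div (Real.exp_ne_zero _) hZpos.ne', Real.log_exp]
      rw [key]; ring
  rw [← Finset.sum_congr rfl hterm]
  have hgibbs : 0 ≤ ∑ j ∈ Finset.range (n+1), a j * Real.log (a j / r j) := by
    have : ∑ j ∈ Finset.range (n+1), (a j - r j)
        ≤ ∑ j ∈ Finset.range (n+1), a j * Real.log (a j / r j) := by
      apply Finset.sum_le_sum
      intro j hj
      exact gibbs_term (ha j) (div_pos (mul_pos (hbin_pos j hj) (Real.exp_pos _)) hZpos)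
    rw [Finset.sum_sub_distrib, hsum, hrsum] at this
    linarith
  have hlogZ : Real.log Z = n * Real.log (1-p+p*Real.exp l) := by
    rw [hZdef, Real.log_pow]
  have expand : ∑ x ∈ Finset.range (n+1),
      (a x * Real.log (a x / r x) + l * x * a x - Real.log Z * a x)
      = (∑ x ∈ Finset.range (n+1), a x * Real.log (a x / r x))
        + l * (∑ x ∈ Finset.range (n+1), (x:ℝ) * a x) - Real.log Z := by
    rw [Finset.sum_sub_distrib, Finset.sum_add_distrib]
    congr 1
    · congr 1
      rw [Finset.mul_sum]
      apply Finset.sum_congr rfl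
      intro x _; ring
    · rw [← Finset.mul_sum, hsum, mul_one]
  rw [expand, hlogZ]
  linarith

lemma main_real (n : ℕ) (hn : 1 ≤ n) {p : ℝ} (hp0 : 0 < p) (hp1 : p < 1) (a : ℕ → ℝ)
    (ha : ∀ j, 0 ≤ a j) (hsum : ∑ j ∈ Finset.range (n+1), a j = 1) (E : ℝ)
    (hE : E = ∑ j ∈ Finset.range (n+1), (j:ℝ) * a j)
    (hcond : (E ≤ n * p ∧ (n:ℝ) * p ≤ n / 2) ∨ ((n:ℝ) * p ≤ E ∧ (n:ℝ) / 2 ≤ n * p)) :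
    (E - n*p)^2 / (2*n*p*(1-p))
      ≤ ∑ j ∈ Finset.range (n+1),
          a j * Real.log (a j / ((n.choose j : ℝ) * p^j * (1-p)^(n-j))) := by
  have hnpos : (0:ℝ) < n := by exact_mod_cast hn
  have hd : (0:ℝ) < n*p*(1-p) := mul_pos (mul_pos hnpos hp0) (by linarith)
  set l : ℝ := (E - n*p) / (n*p*(1-p)) with hl
  have hcond' : (l ≤ 0 ∧ p ≤ 1/2) ∨ (0 ≤ l ∧ 1/2 ≤ p) := by
    rcases hcond with ⟨h1, h2⟩ | ⟨h1, h2⟩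
    · left
      constructor
      · apply div_nonpos_of_nonpos_of_nonneg (by linarith) hd.le
      · nlinarith
    · right
      constructor
      · apply div_nonneg (by linarith) hd.le
      · nlinarith
  have hdv := dv_bound n hp0 hp1 a ha hsum l
  rw [← hE] at hdv
  have hmgf := mgf_bound hp0 hp1 l hcond'
  have hstep : l * E - (n:ℝ) * (p*l + p*(1-p)*l^2/2)
      ≤ l * E - (n:ℝ) * Real.log (1-p+p*Real.exp l) := by
    have := mul_le_mul_of_nonneg_left hmgf hnpos.le
    linarith
  have hval1 : l * E - (n:ℝ) * (p*l + p*(1-p)*l^2/2)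
      = l*(E-(n:ℝ)*p) - ((n:ℝ)*p*(1-p))*l^2/2 := by ring
  have hgen : ∀ d s : ℝ, 0 < d → s/d * s - d * (s/d)^2/2 = s^2/(2*d) := by
    intro d s hd0; field_simp; ring
  have hval2 : l*(E-(n:ℝ)*p) - ((n:ℝ)*p*(1-p))*l^2/2 = (E - n*p)^2 / (2*n*p*(1-p)) := by
    rw [hl, show 2*(n:ℝ)*p*(1-p) = 2*((n:ℝ)*p*(1-p)) by ring]
    exact hgen _ _ hd

  have hval : l * E - (n:ℝ) * (p*l + p*(1-p)*l^2/2) = (E - n*p)^2 / (2*n*p*(1-p)) :=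
    hval1.trans hval2
  linarith


end Aux

theorem stmt_6
    (n : ℕ) (hn : 1 ≤ n) (p : ℝ) (hp0 : 0 < p) (hp1 : p < 1)
    (P : Measure ℕ) [IsProbabilityMeasure P] (hsupp : P {j | n < j} = 0)
    (E : ℝ) (hE : E = ∑' j : ℕ, (j : ℝ) * (P {j}).toReal) :
    ((E ≤ n * p ∧ (n : ℝ) * p ≤ n / 2) ∨ ((n : ℝ) * p ≤ E ∧ (n : ℝ) / 2 ≤ n * p) →
      (((E - n * p) ^ 2 / (2 * n * p * (1 - p)) : ℝ) : EReal) ≤ klDiv P (binMeasure n p)) ∧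
    (p = 1 / 2 →
      ((2 * (E - n / 2) ^ 2 / n : ℝ) : EReal) ≤ klDiv P (binMeasure n p)) := by
  set binj : ℕ → ℝ := fun j => (n.choose j : ℝ) * p^j * (1-p)^(n-j) with hbinj
  have hbin_nonneg : ∀ k, 0 ≤ binj k := fun k => by
    have : (0:ℝ) ≤ (n.choose k : ℝ) := Nat.cast_nonneg _
    have h2 : (0:ℝ) ≤ 1 - p := by linarith
    positivity
  have hbin_pos : ∀ k, k ≤ n → 0 < binj k := by
    intro k hk
    have h1 : (0:ℝ) < (n.choose k : ℝ) := by exact_mod_cast Nat.choose_pos hk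
    have h2 : (0:ℝ) < 1 - p := by linarith
    positivity
  have hbin_zero : ∀ k, n < k → binj k = 0 := by
    intro k hk
    simp [hbinj, Nat.choose_eq_zero_of_lt hk]
  set Q := binMeasure n p with hQdef
  have hQsingle : ∀ k : ℕ, Q {k} = ENNReal.ofReal (binj k) := by
    intro k
    rw [hQdef, binMeasure, Measure.sum_apply _ (measurableSet_singleton k)]
    rw [tsum_eq_single k]
    · simp [Measure.smul_apply, smul_eq_mul, hbinj]
    · intro j hj
      simp [Measure.smul_apply, Measure.dirac_apply' j (measurableSet_singleton k),
        Set.indicator, hj]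
  have hsum_bin : ∑ k ∈ Finset.range (n+1), binj k = 1 := by
    have h1 := add_pow p (1-p) n
    simp only [add_sub_cancel, one_pow] at h1
    rw [show ∑ k ∈ Finset.range (n+1), binj k
        = ∑ k ∈ Finset.range (n+1), p^k * (1-p)^(n-k) * (n.choose k : ℝ) from
      Finset.sum_congr rfl fun k _ => by rw [hbinj]; ring, ← h1]
  have hQuniv : Q Set.univ = 1 := by
    rw [hQdef, binMeasure, Measure.sum_apply _ MeasurableSet.univ]
    have : ∀ j : ℕ, (ENNReal.ofReal (binj j) • Measure.dirac j) Set.univ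
        = ENNReal.ofReal (binj j) := by
      intro j; simp [Measure.smul_apply, smul_eq_mul]
    rw [tsum_congr this]
    rw [tsum_eq_sum (s := Finset.range (n+1)) (by
      intro k hk
      have : n < k := by
        rcases Finset.mem_range.not.mp hk with h
        omega
      simp [hbin_zero k this])]
    rw [← ENNReal.ofReal_sum_of_nonneg (fun k _ => hbin_nonneg k), hsum_bin]
    simp
  haveI hQprob : IsProbabilityMeasure Q := ⟨hQuniv⟩
  set a : ℕ → ℝ := fun k => (P {k}).toReal with ha_def
  have ha : ∀ k, 0 ≤ a k := fun k => ENNReal.toReal_nonneg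
  have hP0 : ∀ k, n < k → P {k} = 0 := by
    intro k hk
    refine measure_mono_null ?_ hsupp
    intro x hx
    simp only [Set.mem_singleton_iff] at hx
    simpa [hx] using hk
  have hPfin : ∀ k, P {k} ≠ ⊤ := fun k => measure_ne_top P _
  have hasum : ∑ k ∈ Finset.range (n+1), a k = 1 := by
    have hPA : P (↑(Finset.range (n+1)) : Set ℕ) = 1 := by
      have hsub : (Set.univ : Set ℕ) ⊆ (↑(Finset.range (n+1)) : Set ℕ) ∪ {j | n < j} := by
        intro x _
        by_cases h : n < x
        · right; exact h
        · left
          exact Finset.mem_coe.mpr (Finset.mem_range.mpr (by omega))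
      have h1 : (1:ENNReal) ≤ P (↑(Finset.range (n+1)) : Set ℕ) := by
        calc (1:ENNReal) = P Set.univ := (measure_univ).symm
          _ ≤ P ((↑(Finset.range (n+1)) : Set ℕ) ∪ {j | n < j}) := measure_mono hsub
          _ ≤ P (↑(Finset.range (n+1)) : Set ℕ) + P {j | n < j} := measure_union_le _ _
          _ = P (↑(Finset.range (n+1)) : Set ℕ) := by rw [hsupp, add_zero]
      exact le_antisymm prob_le_one h1
    have hbi : P (↑(Finset.range (n+1)) : Set ℕ) = ∑ k ∈ Finset.range (n+1), P {k} := by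
      rw [show (↑(Finset.range (n+1)) : Set ℕ) = ⋃ k ∈ Finset.range (n+1), {k} by
        ext x; simp]
      exact measure_biUnion_finset
        (fun i _ j _ hij => by simp [Set.disjoint_singleton, hij])
        (fun b _ => measurableSet_singleton b)
    have := hbi.symm.trans hPA
    have h2 : (∑ k ∈ Finset.range (n+1), P {k}).toReal = 1 := by rw [this]; simp
    rw [ENNReal.toReal_sum (fun k _ => hPfin k)] at h2
    exact h2
  have hEfin : E = ∑ j ∈ Finset.range (n+1), (j:ℝ) * a j := by
    rw [hE]
    exact tsum_eq_sum (by
      intro k hk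
      have hk' : n < k := by
        rcases Finset.mem_range.not.mp hk with h; omega
      simp [ha_def, hP0 k hk'])
  have MAIN : ((E ≤ n * p ∧ (n:ℝ) * p ≤ n / 2) ∨ ((n:ℝ) * p ≤ E ∧ (n:ℝ) / 2 ≤ n * p)) →
      (((E - n * p) ^ 2 / (2 * n * p * (1 - p)) : ℝ) : EReal) ≤ klDiv P Q := by
    intro hcond
    unfold klDiv
    split_ifs with hcase
    · obtain ⟨hac, hint⟩ := hcase
      have hwd := Measure.withDensity_rnDeriv_eq P Q hac
      have hrn : ∀ k, k ≤ n → ((P.rnDeriv Q) k).toReal = a k / binj k := by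
        intro k hk
        have hk1 : Q.withDensity (P.rnDeriv Q) {k} = P {k} := by rw [hwd]
        rw [withDensity_apply _ (measurableSet_singleton k),
          lintegral_singleton' (Measure.measurable_rnDeriv P Q)] at hk1
        have hQk : Q {k} = ENNReal.ofReal (binj k) := hQsingle k
        have hQk0 : Q {k} ≠ 0 := by
          rw [hQk]
          simp only [ne_eq, ENNReal.ofReal_eq_zero, not_le]
          exact hbin_pos k hk
        have := congrArg ENNReal.toReal hk1
        rw [ENNReal.toReal_mul] at this
        have hQkr : (Q {k}).toReal = binj k := by
          rw [hQk, ENNReal.toReal_ofReal (hbin_nonneg k)]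
        rw [hQkr] at this
        rw [eq_div_iff (hbin_pos k hk).ne']
        exact this
      have hInt := integral_countable' hint
      rw [hInt]
      have htsum : (∑' k : ℕ, (P {k}).toReal • Real.log ((P.rnDeriv Q) k).toReal)
          = ∑ k ∈ Finset.range (n+1), a k * Real.log (a k / binj k) := by
        rw [tsum_eq_sum (s := Finset.range (n+1)) (by
          intro k hk
          have hk' : n < k := by
            have := Finset.mem_range.not.mp hk
            omega
          simp [hP0 k hk'])]
        apply Finset.sum_congr rfl
        intro k hk
        have hk' : k ≤ n := Nat.lt_succ_iff.mp (Finset.mem_range.mp hk)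
        rw [smul_eq_mul, hrn k hk']
      erw [htsum]
      have hmain := main_real n hn hp0 hp1 a ha hasum E hEfin hcond
      exact_mod_cast hmain
    · exact le_top
  refine ⟨MAIN, ?_⟩
  intro hp
  have hnp : (n:ℝ) * p = n / 2 := by rw [hp]; ring
  have hcond : (E ≤ n * p ∧ (n:ℝ) * p ≤ n / 2) ∨ ((n:ℝ) * p ≤ E ∧ (n:ℝ) / 2 ≤ n * p) := by
    rcases le_total E ((n:ℝ) * p) with h | h
    · exact Or.inl ⟨h, le_of_eq hnp⟩
    · exact Or.inr ⟨h, le_of_eq hnp.symm⟩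
  have hres := MAIN hcond
  have hn0 : (n:ℝ) ≠ 0 := by
    have : (0:ℝ) < n := by exact_mod_cast hn
    exact this.ne'
  have heq : (E - n * p) ^ 2 / (2 * n * p * (1 - p)) = 2 * (E - n / 2) ^ 2 / n := by
    rw [hp]
    field_simp
    ring
  rw [heq] at hres
  exact hres
end

section
/- Let λ > 0 and let Po(λ) denote the Poisson distribution on ℕ. For every probability measure P on ℕ with finite mean E := Σ_j j·P({j}) such that E ≤ λ, one has D(P‖Po(λ)) ≥ (E − λ)² / (2λ). -/
open MeasureTheory ProbabilityTheory Real

lemma aux_hasSum_exp (x : ℝ) : HasSum (fun j : ℕ => x ^ j / j.factorial) (Real.exp x) := by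
  rw [Real.exp_eq_exp_ℝ]
  exact NormedSpace.expSeries_div_hasSum_exp x

lemma aux_poisson_exp (lam : NNReal) (s : ℝ) :
    HasSum (fun j : ℕ => poissonPMFReal lam j * Real.exp (s * j))
      (Real.exp ((lam : ℝ) * Real.exp s - lam)) := by
  have h := (aux_hasSum_exp ((lam : ℝ) * Real.exp s)).mul_left (Real.exp (-(lam:ℝ)))
  rw [← Real.exp_add] at h
  have he : -(lam:ℝ) + (lam : ℝ) * Real.exp s = (lam : ℝ) * Real.exp s - lam := by ring
  rw [he] at h
  refine h.congr_fun fun j => ?_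
  rw [poissonPMFReal, mul_pow, ← Real.exp_nat_mul, mul_comm (j:ℝ) s]
  ring

lemma aux_pointwise (p q g : ℝ) (hp : 0 ≤ p) (hq : 0 < q) :
    p * g + p - q * Real.exp g ≤ p * Real.log (p / q) := by
  rcases eq_or_lt_of_le hp with h0 | hp
  · rw [← h0]
    have := mul_pos hq (Real.exp_pos g)
    simp; linarith
  · have hy : 0 < q * Real.exp g / p := by positivity
    have h1 := Real.log_le_sub_one_of_pos hy
    have h2 : Real.log (q * Real.exp g / p) = Real.log q + g - Real.log p := by
      rw [Real.log_div (by positivity) (ne_of_gt hp),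
        Real.log_mul (ne_of_gt hq) (Real.exp_ne_zero g), Real.log_exp]
    rw [h2] at h1
    have h3 : p * (Real.log q + g - Real.log p) ≤ p * (q * Real.exp g / p - 1) :=
      mul_le_mul_of_nonneg_left h1 hp.le
    have h4 : p * (q * Real.exp g / p - 1) = q * Real.exp g - p := by
      field_simp
    rw [Real.log_div (ne_of_gt hp) (ne_of_gt hq)]
    rw [h4] at h3
    nlinarith

lemma aux_key_s7 (lam : NNReal) (hlam : 0 < lam) (P : Measure ℕ) [IsProbabilityMeasure P]
    (hsum : Summable (fun j : ℕ => (j : ℝ) * (P {j}).toReal))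
    (hsumL : Summable (fun j : ℕ =>
      (P {j}).toReal * Real.log ((P {j}).toReal / poissonPMFReal lam j)))
    (t : ℝ) :
    t * (∑' j : ℕ, (j : ℝ) * (P {j}).toReal) + lam - lam * Real.exp t ≤
      ∑' j : ℕ, (P {j}).toReal * Real.log ((P {j}).toReal / poissonPMFReal lam j) := by
  set c : ℝ := (lam : ℝ) * Real.exp t - lam with hc
  have hPtsum : ∑' j : ℕ, P {j} = 1 := by
    have := Measure.tsum_indicator_apply_singleton P Set.univ MeasurableSet.univ
    simpa using this
  have hPsummable : Summable (fun j : ℕ => (P {j}).toReal) :=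
    ENNReal.summable_toReal (by rw [hPtsum]; exact ENNReal.one_ne_top)
  have hPhasSum : HasSum (fun j : ℕ => (P {j}).toReal) 1 := by
    have h1 : ∑' j : ℕ, (P {j}).toReal = 1 := by
      rw [← ENNReal.tsum_toReal_eq (fun j => measure_ne_top P {j}), hPtsum, ENNReal.toReal_one]
    rw [← h1]
    exact hPsummable.hasSum
  have hs1 : HasSum (fun j : ℕ => t * ((j : ℝ) * (P {j}).toReal))
      (t * ∑' j : ℕ, (j : ℝ) * (P {j}).toReal) := hsum.hasSum.mul_left t
  have hs2 : HasSum (fun j : ℕ => (1 - c) * (P {j}).toReal) (1 - c) := by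
    simpa using hPhasSum.mul_left (1 - c)
  have hs3 : HasSum (fun j : ℕ => poissonPMFReal lam j * Real.exp (t * j) * Real.exp (-c))
      (1 : ℝ) := by
    have h := (aux_poisson_exp lam t).mul_right (Real.exp (-c))
    have hone : Real.exp ((lam : ℝ) * Real.exp t - lam) * Real.exp (-c) = 1 := by
      rw [← Real.exp_add, hc]; simp
    rwa [hone] at h
  have hF : HasSum (fun j : ℕ => t * ((j : ℝ) * (P {j}).toReal) + (1 - c) * (P {j}).toReal
      - poissonPMFReal lam j * Real.exp (t * j) * Real.exp (-c))
      (t * (∑' j : ℕ, (j : ℝ) * (P {j}).toReal) + (1 - c) - 1) := (hs1.add hs2).sub hs3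
  have hle : ∀ j : ℕ, t * ((j : ℝ) * (P {j}).toReal) + (1 - c) * (P {j}).toReal
      - poissonPMFReal lam j * Real.exp (t * j) * Real.exp (-c)
      ≤ (P {j}).toReal * Real.log ((P {j}).toReal / poissonPMFReal lam j) := by
    intro j
    have hq : 0 < poissonPMFReal lam j := poissonPMFReal_pos hlam
    have hb := aux_pointwise (P {j}).toReal (poissonPMFReal lam j) (t * j - c)
      ENNReal.toReal_nonneg hq
    have hexp : Real.exp (t * j - c) = Real.exp (t * j) * Real.exp (-c) := by
      rw [← Real.exp_add]; ring_nf
    rw [hexp] at hb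
    nlinarith [hb]
  have hfin := hasSum_le hle hF hsumL.hasSum
  linarith [hfin]

lemma aux_final (lam E : ℝ) (hlam : 0 < lam) (hE0 : 0 < E) (hE : E ≤ lam) :
    (E - lam) ^ 2 / (2 * lam) ≤ E * Real.log (E / lam) + lam - E := by
  set x : ℝ := E / lam with hx
  have hxpos : 0 < x := by positivity
  have hx1 : x ≤ 1 := by rw [hx, div_le_one hlam]; exact hE
  have hlog : (x - x⁻¹) / 2 ≤ Real.log x := by
    rw [← Real.sinh_log hxpos]
    have h : 0 ≤ -Real.log x := by simpa using Real.log_nonpos hxpos.le hx1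
    have := Real.self_le_sinh_iff.mpr h
    rw [Real.sinh_neg] at this
    linarith
  have h2 : E * ((x - x⁻¹) / 2) ≤ E * Real.log x := mul_le_mul_of_nonneg_left hlog hE0.le
  have h3 : E * ((x - x⁻¹) / 2) = (E ^ 2 - lam ^ 2) / (2 * lam) := by
    rw [hx]
    field_simp
  have h4 : (E - lam) ^ 2 / (2 * lam) = (E ^ 2 - lam ^ 2) / (2 * lam) + lam - E := by
    field_simp
    ring
  rw [h4]
  rw [h3] at h2
  linarith

theorem stmt_7
    (lam : NNReal) (hlam : 0 < lam)
    (P : Measure ℕ) [IsProbabilityMeasure P]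
    (hsum : Summable (fun j : ℕ => (j : ℝ) * (P {j}).toReal))
    (hE : ∑' j : ℕ, (j : ℝ) * (P {j}).toReal ≤ (lam : ℝ)) :
    ((((∑' j : ℕ, (j : ℝ) * (P {j}).toReal) - lam) ^ 2 / (2 * lam) : ℝ) : EReal)
      ≤ klDiv P (poissonMeasure lam) := by
  classical
  set Q : Measure ℕ := poissonMeasure lam with hQ
  by_cases hcond : P ≪ Q ∧ Integrable (fun ω => Real.log (P.rnDeriv Q ω).toReal) P
  · rw [klDiv, if_pos hcond]
    rw [EReal.coe_le_coe_iff]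
    have hlamR : (0 : ℝ) < lam := hlam
    -- point masses of Q
    have hQj : ∀ j : ℕ, Q {j} = ENNReal.ofReal (poissonPMFReal lam j) := by
      intro j
      rw [hQ, poissonMeasure_singleton]
      rfl
    have hqpos : ∀ j : ℕ, 0 < poissonPMFReal lam j := fun j => poissonPMFReal_pos hlam
    have hQjne : ∀ j : ℕ, Q {j} ≠ 0 := by
      intro j
      rw [hQj j]
      simp [ENNReal.ofReal_eq_zero, not_le, hqpos j]
    -- rnDeriv identification
    have hrn : ∀ j : ℕ, (P.rnDeriv Q j).toReal
        = (P {j}).toReal / poissonPMFReal lam j := by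
      intro j
      have h1 := Measure.setLIntegral_rnDeriv hcond.1 ({j} : Set ℕ)
      rw [lintegral_singleton] at h1
      have hqt : Q {j} ≠ ⊤ := measure_ne_top Q {j}
      have h2 : P.rnDeriv Q j = P {j} / Q {j} := by
        rw [ENNReal.eq_div_iff (hQjne j) hqt, mul_comm]
        exact h1
      rw [h2, ENNReal.toReal_div, hQj j, ENNReal.toReal_ofReal (hqpos j).le]
    -- integral = tsum
    have hint : (∫ ω, Real.log (P.rnDeriv Q ω).toReal ∂P)
        = ∑' j : ℕ, (P {j}).toReal * Real.log ((P {j}).toReal / poissonPMFReal lam j) := by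
      rw [integral_countable' hcond.2]
      exact tsum_congr fun j => by rw [smul_eq_mul, hrn j, measureReal_def]
    -- summability of the log series
    have hsumL : Summable (fun j : ℕ =>
        (P {j}).toReal * Real.log ((P {j}).toReal / poissonPMFReal lam j)) := by
      have hfi := hcond.2.hasFiniteIntegral
      rw [HasFiniteIntegral, lintegral_countable'] at hfi
      have hsum1 : Summable (fun j : ℕ =>
          ((‖Real.log (P.rnDeriv Q j).toReal‖₊ : ENNReal) * P {j}).toReal) :=
        ENNReal.summable_toReal hfi.ne
      refine Summable.of_norm_bounded hsum1 fun j => ?_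
      rw [ENNReal.toReal_mul]
      have : ((‖Real.log (P.rnDeriv Q j).toReal‖₊ : ENNReal)).toReal
          = ‖Real.log (P.rnDeriv Q j).toReal‖ := by simp
      rw [this, hrn j, norm_mul, Real.norm_eq_abs (ENNReal.toReal (P {j})),
        abs_of_nonneg ENNReal.toReal_nonneg, mul_comm]
    rw [hint]
    set E : ℝ := ∑' j : ℕ, (j : ℝ) * (P {j}).toReal with hEdef
    have hEnn : 0 ≤ E := tsum_nonneg fun j => by positivity
    rcases eq_or_lt_of_le hEnn with hE0 | hE0
    · -- E = 0 : use t = log (1/2)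
      have hkey := aux_key_s7 lam hlam P hsum hsumL (Real.log (1/2))
      rw [← hEdef, ← hE0] at hkey
      rw [Real.exp_log (by norm_num)] at hkey
      rw [← hE0]
      calc ((0:ℝ) - lam) ^ 2 / (2 * lam) = Real.log (1/2) * 0 + lam - lam * (1/2) := by
            rw [mul_zero, zero_add]
            field_simp
            ring
        _ ≤ _ := hkey
    · -- E > 0 : use t = log (E / lam)
      have hkey := aux_key_s7 lam hlam P hsum hsumL (Real.log (E / lam))
      rw [← hEdef] at hkey
      rw [Real.exp_log (by positivity)] at hkey
      have hlamE : (lam : ℝ) * (E / lam) = E := by field_simp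
      rw [hlamE] at hkey
      have hfin := aux_final (lam : ℝ) E hlamR hE0 hE
      calc (E - lam) ^ 2 / (2 * lam) ≤ E * Real.log (E / lam) + lam - E := hfin
        _ = Real.log (E / lam) * E + lam - E := by ring
        _ ≤ _ := hkey
  · rw [klDiv, if_neg hcond]
    exact le_top
end

section
/- Let Q₀ be a probability measure on ℝ with mean 0, variance 1 and finite, strictly positive third moment E_{Q₀}[X³] > 0, such that Z(β) = ∫ exp(βx) dQ₀(x) < ∞ for all β in an open interval Γ containing 0; for β ∈ Γ let Q_β be the probability measure with dQ_β/dQ₀ = exp(βx)/Z(β), with mean μ_β. Then there exists ε > 0 such that for every β ∈ Γ with μ_β ∈ [−ε, 0], one has D(Q_β‖Q₀) ≥ μ_β²/2. -/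
open MeasureTheory ProbabilityTheory Real


lemma aux_exp_neg_deriv (x : ℝ) : HasDerivAt (fun y : ℝ => Real.exp (-y)) (-Real.exp (-x)) x := by
  have := (hasDerivAt_neg x).exp
  simpa using this

lemma aux_exp_le_neg {y : ℝ} (hy : y ≤ 0) :
    Real.exp y ≤ 1 + y + y^2/2 + y^3/6 + y^4/24 := by
  have hk : ∀ x : ℝ, HasDerivAt
      (fun y : ℝ => (1 + y + y^2/2 + y^3/6 + y^4/24) * Real.exp (-y))
      (-(x^4/24) * Real.exp (-x)) x := by
    intro x
    have h1 : HasDerivAt (fun y : ℝ => 1 + y + y^2/2 + y^3/6 + y^4/24)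
        (1 + x + x^2/2 + x^3/6) x := by
      have : HasDerivAt (fun y : ℝ => 1 + y + y^2/2 + y^3/6 + y^4/24)
          (0 + 1 + (2*x^1)/2 + (3*x^2)/6 + (4*x^3)/24) x :=
        ((((hasDerivAt_const x (1:ℝ)).add (hasDerivAt_id x)).add
          ((hasDerivAt_pow 2 x).div_const 2)).add
          ((hasDerivAt_pow 3 x).div_const 6)).add
          ((hasDerivAt_pow 4 x).div_const 24)
      convert this using 1; ring
    have := h1.mul (aux_exp_neg_deriv x)
    exact this.congr_deriv (by ring)
  have hanti : Antitone (fun y : ℝ => (1 + y + y^2/2 + y^3/6 + y^4/24) * Real.exp (-y)) :=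
    antitone_of_hasDerivAt_nonpos hk (by
      intro x
      have : (0:ℝ) ≤ x^4/24 * Real.exp (-x) := by positivity
      simpa using this)
  have h1 : (1:ℝ) ≤ (1 + y + y^2/2 + y^3/6 + y^4/24) * Real.exp (-y) := by
    have := hanti hy
    simpa using this
  have hepos : (0:ℝ) < Real.exp (-y) := Real.exp_pos _
  have key : Real.exp y * Real.exp (-y) ≤
      (1 + y + y^2/2 + y^3/6 + y^4/24) * Real.exp (-y) := by
    rw [← Real.exp_add]; simpa using h1
  exact le_of_mul_le_mul_right key hepos

lemma aux_exp_le_pos {y : ℝ} (hy : 0 ≤ y) :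
    Real.exp y ≤ 1 + y + y^2/2 + y^3/6 + y^4/24 * Real.exp y := by
  have hd : ∀ x : ℝ, HasDerivAt
      (fun y : ℝ => (1 + y + y^2/2 + y^3/6) * Real.exp (-y) + y^4/24)
      ((x^3/6) * (1 - Real.exp (-x))) x := by
    intro x
    have h1 : HasDerivAt (fun y : ℝ => 1 + y + y^2/2 + y^3/6) (1 + x + x^2/2) x := by
      have : HasDerivAt (fun y : ℝ => 1 + y + y^2/2 + y^3/6)
          (0 + 1 + (2*x^1)/2 + (3*x^2)/6) x :=
        (((hasDerivAt_const x (1:ℝ)).add (hasDerivAt_id x)).add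
          ((hasDerivAt_pow 2 x).div_const 2)).add ((hasDerivAt_pow 3 x).div_const 6)
      convert this using 1; ring
    have h2 := (h1.mul (aux_exp_neg_deriv x)).add ((hasDerivAt_pow 4 x).div_const 24)
    exact h2.congr_deriv (by ring)
  have hmono : MonotoneOn (fun y : ℝ => (1 + y + y^2/2 + y^3/6) * Real.exp (-y) + y^4/24)
      (Set.Ici (0:ℝ)) := by
    apply monotoneOn_of_hasDerivWithinAt_nonneg (convex_Ici 0)
      (Continuous.continuousOn (by fun_prop))
      (fun x _ => (hd x).hasDerivWithinAt)
    intro x hx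
    rw [interior_Ici] at hx
    have hx' : (0:ℝ) < x := hx
    have h2 : Real.exp (-x) ≤ 1 := by
      rw [Real.exp_le_one_iff]; linarith
    have h3 : (0:ℝ) ≤ x^3/6 := by positivity
    nlinarith
  have h1 : (1:ℝ) ≤ (1 + y + y^2/2 + y^3/6) * Real.exp (-y) + y^4/24 := by
    have := hmono (Set.self_mem_Ici) (Set.mem_Ici.2 hy) hy
    simpa using this
  have he : Real.exp (-y) * Real.exp y = 1 := by rw [← Real.exp_add]; simp
  have hmul := mul_le_mul_of_nonneg_right h1 (le_of_lt (Real.exp_pos y))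
  have hexp : ((1 + y + y^2/2 + y^3/6) * Real.exp (-y) + y^4/24) * Real.exp y
      = (1 + y + y^2/2 + y^3/6) * (Real.exp (-y) * Real.exp y) + y^4/24 * Real.exp y := by
    ring
  rw [hexp, he] at hmul
  linarith

/-- unified bound -/
lemma aux_exp_taylor (y : ℝ) :
    Real.exp y ≤ 1 + y + y^2/2 + y^3/6 + y^4/24 * Real.exp |y| := by
  rcases le_or_gt y 0 with h | h
  · have h1 := aux_exp_le_neg h
    have h2 : (1:ℝ) ≤ Real.exp |y| := Real.one_le_exp (abs_nonneg y)
    have h3 : (0:ℝ) ≤ y^4/24 := by positivity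
    nlinarith [mul_le_mul_of_nonneg_left h2 h3]
  · have h1 := aux_exp_le_pos h.le
    rw [abs_of_pos h]
    exact h1



lemma aux_quartic_le_exp {t : ℝ} (ht : 0 ≤ t) : t^4/256 ≤ Real.exp t := by
  have h1 : t/4 + 1 ≤ Real.exp (t/4) := Real.add_one_le_exp _
  have h2 : (t/4)^4 ≤ (Real.exp (t/4))^4 := by
    apply pow_le_pow_left₀ (by positivity); linarith
  have h3 : (Real.exp (t/4))^4 = Real.exp t := by
    rw [← Real.exp_nat_mul]; congr 1; push_cast; ring
  calc t^4/256 = (t/4)^4 := by ring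
  _ ≤ (Real.exp (t/4))^4 := h2
  _ = Real.exp t := h3

lemma aux_exp_abs_le (δ a x : ℝ) :
    Real.exp (δ * |x| + a * x) ≤ Real.exp ((a + δ) * x) + Real.exp ((a - δ) * x) := by
  rcases le_or_gt 0 x with h | h
  · rw [abs_of_nonneg h]
    have : δ * x + a * x = (a + δ) * x := by ring
    rw [this]
    nlinarith [Real.exp_pos ((a - δ) * x)]
  · rw [abs_of_neg h]
    have : δ * -x + a * x = (a - δ) * x := by ring
    rw [this]
    nlinarith [Real.exp_pos ((a + δ) * x)]

lemma aux_integ_mul_exp {ν : Measure ℝ} (a δ : ℝ) (hδ : 0 < δ)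
    (h1 : Integrable (fun x => Real.exp ((a + δ) * x)) ν)
    (h2 : Integrable (fun x => Real.exp ((a - δ) * x)) ν) :
    Integrable (fun x => x * Real.exp (a * x)) ν := by
  refine Integrable.mono' ((h1.add h2).const_mul (1/δ))
    (Measurable.aestronglyMeasurable
      (measurable_id.mul ((measurable_id.const_mul a).exp))) ?_
  filter_upwards with x
  have hx : δ * |x| ≤ Real.exp (δ * |x|) := by
    have := Real.add_one_le_exp (δ * |x|); linarith
  have h3 : δ * |x| * Real.exp (a * x) ≤ Real.exp (δ * |x|) * Real.exp (a * x) :=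
    mul_le_mul_of_nonneg_right hx (Real.exp_pos _).le
  rw [← Real.exp_add] at h3
  have h5 : δ * (|x| * Real.exp (a * x)) ≤
      Real.exp ((a+δ)*x) + Real.exp ((a-δ)*x) := by
    have := h3.trans (aux_exp_abs_le δ a x); linarith [this]
  have h6 := mul_le_mul_of_nonneg_left h5 (le_of_lt (one_div_pos.2 hδ))
  have heq : (1/δ) * (δ * (|x| * Real.exp (a * x))) = |x| * Real.exp (a * x) := by
    field_simp
  rw [heq] at h6
  calc ‖x * Real.exp (a * x)‖ = |x| * Real.exp (a * x) := by
        rw [norm_mul]; simp [Real.abs_exp]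
  _ ≤ (1/δ) * (Real.exp ((a+δ)*x) + Real.exp ((a-δ)*x)) := h6

lemma aux_integ_pow4_exp {ν : Measure ℝ} (a δ : ℝ) (hδ : 0 < δ)
    (h1 : Integrable (fun x => Real.exp ((a + δ) * x)) ν)
    (h2 : Integrable (fun x => Real.exp ((a - δ) * x)) ν) :
    Integrable (fun x => x^4 * Real.exp (a * x)) ν := by
  refine Integrable.mono' ((h1.add h2).const_mul (256/δ^4))
    (Measurable.aestronglyMeasurable
      ((measurable_id.pow_const 4).mul ((measurable_id.const_mul a).exp))) ?_
  filter_upwards with x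
  have h3 := aux_quartic_le_exp (t := δ * |x|) (by positivity)
  have h4 : (δ * |x|)^4 = δ^4 * x^4 := by
    rw [mul_pow, pow_abs, abs_of_nonneg (by positivity : (0:ℝ) ≤ x^4)]
  rw [h4] at h3
  have h5 : δ^4 * (x^4 * Real.exp (a * x)) ≤
      256 * (Real.exp ((a+δ)*x) + Real.exp ((a-δ)*x)) := by
    have h6 : δ^4 * x^4 * Real.exp (a*x) ≤ 256 * (Real.exp (δ*|x|) * Real.exp (a*x)) := by
      nlinarith [Real.exp_pos (a*x), h3]
    rw [← Real.exp_add] at h6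
    have h7 := aux_exp_abs_le δ a x
    nlinarith [h6, h7]
  have hδ4 : (0:ℝ) < δ^4 := by positivity
  have h6 := mul_le_mul_of_nonneg_left h5 (le_of_lt (one_div_pos.2 hδ4))
  have heq : (1/δ^4) * (δ^4 * (x^4 * Real.exp (a * x))) = x^4 * Real.exp (a * x) := by
    field_simp
  rw [heq] at h6
  calc ‖x^4 * Real.exp (a * x)‖ = x^4 * Real.exp (a * x) := by
        rw [norm_mul, Real.norm_eq_abs, Real.norm_eq_abs, Real.abs_exp,
          abs_of_nonneg (by positivity : (0:ℝ) ≤ x^4)]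
  _ ≤ (1/δ^4) * (256 * (Real.exp ((a+δ)*x) + Real.exp ((a-δ)*x))) := by
        have : (1/δ^4) * (256 * (Real.exp ((a+δ)*x) + Real.exp ((a-δ)*x)))
            = 256/δ^4 * (Real.exp ((a+δ)*x) + Real.exp ((a-δ)*x)) := by ring
        rw [this] at h6 ⊢
        exact h6
  _ = 256/δ^4 * (Real.exp ((a+δ)*x) + Real.exp ((a-δ)*x)) := by ring

lemma klDiv_eq {Ω : Type*} [MeasurableSpace Ω] {P Q : Measure Ω}
    (h1 : P ≪ Q) (h2 : Integrable (fun ω => Real.log (P.rnDeriv Q ω).toReal) P) :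
    klDiv P Q = ((∫ ω, Real.log (P.rnDeriv Q ω).toReal ∂P : ℝ) : EReal) := by
  rw [klDiv, if_pos ⟨h1, h2⟩]

set_option maxHeartbeats 1000000 in
theorem stmt_10
    (Q₀ : Measure ℝ) [IsProbabilityMeasure Q₀]
    (hint1 : Integrable (fun x => x) Q₀) (hmean : ∫ x, x ∂Q₀ = 0)
    (hvar : variance id Q₀ = 1)
    (hint3 : Integrable (fun x => x ^ 3) Q₀) (hthird : 0 < ∫ x, x ^ 3 ∂Q₀)
    (Γ : Set ℝ) (hΓopen : IsOpen Γ) (hΓconn : Γ.OrdConnected) (h0Γ : (0 : ℝ) ∈ Γ)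
    (hZ : ∀ β ∈ Γ, Integrable (fun x => Real.exp (β * x)) Q₀)
    (Q : ℝ → Measure ℝ)
    (hQ : ∀ β ∈ Γ, Q β = Q₀.withDensity (fun x =>
      ENNReal.ofReal (Real.exp (β * x) / ∫ y, Real.exp (β * y) ∂Q₀)))
    (μ : ℝ → ℝ) (hμ : ∀ β ∈ Γ, μ β = ∫ x, x ∂(Q β)) :
    ∃ ε > 0, ∀ β ∈ Γ, μ β ∈ Set.Icc (-ε) 0 →
      (((μ β) ^ 2 / 2 : ℝ) : EReal) ≤ klDiv (Q β) Q₀ := by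
  classical
  obtain ⟨r, hr, hball⟩ := Metric.isOpen_iff.mp hΓopen 0 h0Γ
  set η : ℝ := r/4 with hηdef
  have hη0 : 0 < η := by positivity
  have hmemΓ : ∀ t : ℝ, |t| ≤ 2*η → t ∈ Γ := by
    intro t ht
    apply hball
    rw [Metric.mem_ball, Real.dist_eq, sub_zero]
    calc |t| ≤ 2*η := ht
    _ < r := by rw [hηdef]; linarith
  -- integrability of x^2, x^3
  have hsq : Integrable (fun x => x^2) Q₀ := by
    refine (hint3.abs.add (integrable_const 1)).mono'
      (Measurable.aestronglyMeasurable (measurable_id.pow_const 2)) ?_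
    filter_upwards with x
    simp only [Pi.add_apply]
    rw [Real.norm_eq_abs, abs_of_nonneg (by positivity : (0:ℝ) ≤ x^2)]
    rcases le_or_gt (|x|) 1 with h | h
    · have : x^2 ≤ 1 := by nlinarith [abs_nonneg x, sq_abs x]
      have h2 : (0:ℝ) ≤ |x^3| := abs_nonneg _
      linarith
    · have h1 : x^2 = |x|^2 := (sq_abs x).symm
      have h2 : |x|^2 ≤ |x|^3 := by nlinarith [abs_nonneg x]
      have h3 : |x|^3 = |x^3| := (abs_pow x 3).symm
      linarith [h1 ▸ h2, h3 ▸ le_refl (|x|^3)]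
  have hintsq : ∫ x, x^2 ∂Q₀ = 1 := by
    have hmem2 : MemLp id 2 Q₀ :=
      (memLp_two_iff_integrable_sq aestronglyMeasurable_id).2 (by simpa using hsq)
    have hv := variance_eq_sub hmem2
    rw [hvar] at hv
    have h1 : ∫ x, (id x : ℝ) ∂Q₀ = 0 := by simpa using hmean
    have h2 : ∫ x, (id ^ 2) x ∂Q₀ = ∫ x, x^2 ∂Q₀ := by
      apply integral_congr_ae; filter_upwards with x; simp
    rw [h1] at hv
    simp only [Pi.pow_apply] at hv h2
    rw [h2] at hv
    linarith [hv]
  -- exp integrability around 0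
  have hexp2η : Integrable (fun x => Real.exp ((2*η) * x)) Q₀ :=
    hZ _ (hmemΓ _ (by rw [abs_of_pos (by positivity)]))
  have hexpm2η : Integrable (fun x => Real.exp ((-(2*η)) * x)) Q₀ :=
    hZ _ (hmemΓ _ (by rw [abs_of_neg (by linarith), neg_neg]))
  have hexp0 : Integrable (fun x => Real.exp ((0:ℝ) * x)) Q₀ := by
    simp only [zero_mul, Real.exp_zero]; exact integrable_const 1
  have hx4p : Integrable (fun x => x^4 * Real.exp (η * x)) Q₀ := by
    refine aux_integ_pow4_exp η η hη0 ?_ ?_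
    · have : η + η = 2*η := by ring
      rw [this]; exact hexp2η
    · have : η - η = 0 := by ring
      rw [this]; exact hexp0
  have hx4m : Integrable (fun x => x^4 * Real.exp ((-η) * x)) Q₀ := by
    refine aux_integ_pow4_exp (-η) η hη0 ?_ ?_
    · have : -η + η = 0 := by ring
      rw [this]; exact hexp0
    · have : -η - η = -(2*η) := by ring
      rw [this]; exact hexpm2η
  have hx4 : Integrable (fun x => x^4 * (Real.exp (η*x) + Real.exp (-(η*x)))) Q₀ := by
    have := hx4p.add hx4m
    refine this.congr ?_
    filter_upwards with x
    simp only [Pi.add_apply]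
    have : (-η) * x = -(η*x) := by ring
    rw [this]; ring
  set C : ℝ := ∫ x, x^4 * (Real.exp (η*x) + Real.exp (-(η*x))) ∂Q₀ with hCdef
  have hC0 : 0 ≤ C := by
    apply integral_nonneg
    intro x
    have := Real.exp_pos (η*x)
    have := Real.exp_pos (-(η*x))
    positivity
  set M : ℝ := ∫ x, x^3 ∂Q₀ with hMdef
  set ε : ℝ := min η (4*M/(C+1)) with hεdef
  have hε0 : 0 < ε := by
    apply lt_min hη0
    apply div_pos (by linarith) (by linarith)
  have hεη : ε ≤ η := min_le_left _ _
  -- positivity of Z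
  have hZge1 : ∀ t ∈ Γ, 1 ≤ ∫ x, Real.exp (t*x) ∂Q₀ := by
    intro t ht
    have hptw : ∀ x : ℝ, 1 + t*x ≤ Real.exp (t*x) := fun x => by
      linarith [Real.add_one_le_exp (t*x)]
    have h := integral_mono (μ := Q₀) (f := fun x => 1 + t*x)
      ((integrable_const 1).add (hint1.const_mul t)) (hZ t ht) (fun x => hptw x)
    rw [integral_add (integrable_const 1) (hint1.const_mul t), integral_const,
      integral_const_mul, hmean] at h
    simpa using h
  -- core bound
  have hcore : ∀ m : ℝ, -ε ≤ m → m ≤ 0 →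
      Real.log (∫ x, Real.exp (m*x) ∂Q₀) ≤ m^2/2 := by
    intro m hm1 hm2
    have hmabs : |m| ≤ ε := abs_le.2 ⟨hm1, by linarith⟩
    have hmΓ : m ∈ Γ := hmemΓ m (by linarith [hmabs, hεη, hη0])
    have hint_m : Integrable (fun x => Real.exp (m*x)) Q₀ := hZ m hmΓ
    -- pointwise Taylor bound
    have hptw : ∀ x : ℝ, Real.exp (m*x) ≤
        1 + m*x + m^2/2*(x^2) + m^3/6*(x^3)
          + m^4/24*(x^4 * (Real.exp (η*x) + Real.exp (-(η*x)))) := by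
      intro x
      have h1 := aux_exp_taylor (m*x)
      have h2 : Real.exp |m*x| ≤ Real.exp (η*x) + Real.exp (-(η*x)) := by
        have h3 : |m*x| ≤ η * |x| := by
          rw [abs_mul]
          apply mul_le_mul_of_nonneg_right _ (abs_nonneg x)
          linarith [hmabs, hεη]
        have h4 : Real.exp |m*x| ≤ Real.exp (η * |x|) := Real.exp_le_exp.2 h3
        have h5 := aux_exp_abs_le η 0 x
        simp only [zero_mul, add_zero, zero_add, zero_sub] at h5
        have h7 : -η * x = -(η*x) := by ring
        rw [h7] at h5
        linarith
      have h8 : (0:ℝ) ≤ (m*x)^4/24 := by positivity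
      have h9 : (m*x)^4/24 * Real.exp |m*x|
          ≤ (m*x)^4/24 * (Real.exp (η*x) + Real.exp (-(η*x))) :=
        mul_le_mul_of_nonneg_left h2 h8
      calc Real.exp (m*x)
          ≤ 1 + m*x + (m*x)^2/2 + (m*x)^3/6 + (m*x)^4/24 * Real.exp |m*x| := h1
        _ ≤ 1 + m*x + (m*x)^2/2 + (m*x)^3/6
            + (m*x)^4/24 * (Real.exp (η*x) + Real.exp (-(η*x))) := by linarith
        _ = 1 + m*x + m^2/2*(x^2) + m^3/6*(x^3)
            + m^4/24*(x^4 * (Real.exp (η*x) + Real.exp (-(η*x)))) := by ring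
    -- integrate
    have hRHSint : Integrable (fun x => 1 + m*x + m^2/2*(x^2) + m^3/6*(x^3)
        + m^4/24*(x^4 * (Real.exp (η*x) + Real.exp (-(η*x))))) Q₀ :=
      ((((integrable_const 1).add (hint1.const_mul m)).add
        (hsq.const_mul (m^2/2))).add (hint3.const_mul (m^3/6))).add
        (hx4.const_mul (m^4/24))
    have hIle := integral_mono hint_m hRHSint hptw
    have hRHSval : ∫ x, (1 + m*x + m^2/2*(x^2) + m^3/6*(x^3)
        + m^4/24*(x^4 * (Real.exp (η*x) + Real.exp (-(η*x))))) ∂Q₀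
        = 1 + m^2/2 + m^3/6*M + m^4/24*C := by
      have i1 : Integrable (fun x : ℝ => 1 + m*x) Q₀ :=
        (integrable_const 1).add (hint1.const_mul m)
      have i2 : Integrable (fun x : ℝ => 1 + m*x + m^2/2*(x^2)) Q₀ :=
        i1.add (hsq.const_mul (m^2/2))
      have i3 : Integrable (fun x : ℝ => 1 + m*x + m^2/2*(x^2) + m^3/6*(x^3)) Q₀ :=
        i2.add (hint3.const_mul (m^3/6))
      rw [integral_add i3 (hx4.const_mul (m^4/24)),
        integral_add i2 (hint3.const_mul (m^3/6)),
        integral_add i1 (hsq.const_mul (m^2/2)),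
        integral_add (integrable_const 1) (hint1.const_mul m),
        integral_const, integral_const_mul, integral_const_mul, integral_const_mul,
        integral_const_mul, hmean, hintsq, ← hMdef, ← hCdef,
        probReal_univ, smul_eq_mul]
      ring
    rw [hRHSval] at hIle
    -- negativity of the error terms
    have herr : m^3/6*M + m^4/24*C ≤ 0 := by
      have hmle : -m ≤ 4*M/(C+1) := by
        have := hm1
        have h2 : ε ≤ 4*M/(C+1) := min_le_right _ _
        linarith
      have hC1 : (0:ℝ) < C + 1 := by linarith
      have h3 : (-m) * (C+1) ≤ 4*M := by
        have h3a := mul_le_mul_of_nonneg_right hmle (le_of_lt hC1)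
        rwa [div_mul_cancel₀ _ (ne_of_gt hC1)] at h3a
      have hm3 : m^3 ≤ 0 := by
        have : m^3 = m * m^2 := by ring
        rw [this]
        exact mul_nonpos_of_nonpos_of_nonneg hm2 (sq_nonneg m)
      have hm4 : (0:ℝ) ≤ m^4 := by positivity
      -- m^4*(C+1) ≤ -4*M*m^3
      have h4 : m^4*(C+1) ≤ -(4*M)*m^3 := by nlinarith [h3, hm3, hm4]
      have h5 : m^4*C ≤ m^4*(C+1) := by nlinarith [hm4]
      nlinarith [h4, h5]
    have hZle : ∫ x, Real.exp (m*x) ∂Q₀ ≤ 1 + m^2/2 := by linarith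
    have hZ1 : (1:ℝ) ≤ ∫ x, Real.exp (m*x) ∂Q₀ := hZge1 m hmΓ
    calc Real.log (∫ x, Real.exp (m*x) ∂Q₀)
        ≤ Real.log (1 + m^2/2) := Real.log_le_log (by linarith) hZle
      _ ≤ (1 + m^2/2) - 1 := Real.log_le_sub_one_of_pos (by positivity)
      _ = m^2/2 := by ring
  refine ⟨ε, hε0, ?_⟩
  intro β hβ hmemIcc
  obtain ⟨hmlo, hmhi⟩ := hmemIcc
  set Zβ : ℝ := ∫ y, Real.exp (β * y) ∂Q₀ with hZβdef
  have hZβ1 : 1 ≤ Zβ := hZge1 β hβ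
  have hZβpos : 0 < Zβ := by linarith
  set m : ℝ := μ β with hmdef
  have hmΓ : m ∈ Γ := hmemΓ m (by
    have : |m| ≤ ε := abs_le.2 ⟨hmlo, by linarith⟩
    linarith [hεη, hη0])
  set Zm : ℝ := ∫ y, Real.exp (m * y) ∂Q₀ with hZmdef
  have hZm1 : 1 ≤ Zm := hZge1 m hmΓ
  have hZmpos : 0 < Zm := by linarith
  have hdmeas : Measurable (fun x : ℝ => ENNReal.ofReal (Real.exp (β * x) / Zβ)) := by
    apply Measurable.ennreal_ofReal
    exact ((measurable_const.mul measurable_id).exp.div_const Zβ)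
  have hQβ : Q β = Q₀.withDensity (fun x => ENNReal.ofReal (Real.exp (β * x) / Zβ)) :=
    hQ β hβ
  have hdnn : ∀ x : ℝ, 0 ≤ Real.exp (β * x) / Zβ := fun x => by positivity
  -- conversion of integrals
  have hconv : ∀ g : ℝ → ℝ, ∫ x, g x ∂(Q β)
      = ∫ x, (Real.exp (β * x) / Zβ) * g x ∂Q₀ := by
    intro g
    rw [hQβ]
    have hf_meas : Measurable (fun x : ℝ => Real.toNNReal (Real.exp (β * x) / Zβ)) := by
      apply Measurable.real_toNNReal
      exact ((measurable_const.mul measurable_id).exp.div_const Zβ)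
    have heq : (fun x : ℝ => ENNReal.ofReal (Real.exp (β * x) / Zβ))
        = (fun x : ℝ => ((Real.toNNReal (Real.exp (β * x) / Zβ) : NNReal) : ENNReal)) := rfl
    rw [heq, integral_withDensity_eq_integral_smul hf_meas g]
    congr 1
    funext x
    rw [NNReal.smul_def, Real.coe_toNNReal _ (hdnn x), smul_eq_mul]
  -- Q β is a probability measure
  have hdens_int : Integrable (fun x => Real.exp (β * x) / Zβ) Q₀ :=
    (hZ β hβ).div_const Zβ
  have hprob : IsProbabilityMeasure (Q β) := by
    constructor
    rw [hQβ, withDensity_apply _ MeasurableSet.univ, setLIntegral_univ,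
      ← ofReal_integral_eq_lintegral_ofReal hdens_int
        (Filter.Eventually.of_forall (fun x => hdnn x)),
      integral_div, ← hZβdef, div_self (ne_of_gt hZβpos), ENNReal.ofReal_one]
  haveI := hprob
  -- integrability of x under Q β
  obtain ⟨rβ, hrβ, hballβ⟩ := Metric.isOpen_iff.mp hΓopen β hβ
  have hβp : β + rβ/2 ∈ Γ := hballβ (by
    rw [Metric.mem_ball, Real.dist_eq]
    rw [show β + rβ/2 - β = rβ/2 by ring, abs_of_pos (by linarith)]
    linarith)
  have hβm : β - rβ/2 ∈ Γ := hballβ (by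
    rw [Metric.mem_ball, Real.dist_eq]
    rw [show β - rβ/2 - β = -(rβ/2) by ring, abs_neg, abs_of_pos (by linarith)]
    linarith)
  have hxe : Integrable (fun x => x * Real.exp (β * x)) Q₀ :=
    aux_integ_mul_exp β (rβ/2) (by linarith) (hZ _ hβp) (hZ _ hβm)
  have hofReal_lt : ∀ᵐ x ∂Q₀, ENNReal.ofReal (Real.exp (β * x) / Zβ) < ⊤ :=
    Filter.Eventually.of_forall (fun x => ENNReal.ofReal_lt_top)
  have hxQβ : Integrable (fun x => x) (Q β) := by
    rw [hQβ, integrable_withDensity_iff hdmeas hofReal_lt]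
    refine ((hxe.div_const Zβ)).congr ?_
    filter_upwards with x
    rw [ENNReal.toReal_ofReal (hdnn x)]
    ring
  have hmint : m = ∫ x, x ∂(Q β) := by rw [hmdef, hμ β hβ]
  -- klDiv value
  have hac : Q β ≪ Q₀ := hQβ ▸ withDensity_absolutelyContinuous Q₀ _
  have hrn : (Q β).rnDeriv Q₀ =ᵐ[Q₀] fun x => ENNReal.ofReal (Real.exp (β * x) / Zβ) := by
    rw [hQβ]; exact Measure.rnDeriv_withDensity Q₀ hdmeas
  have hrnQβ : (Q β).rnDeriv Q₀ =ᵐ[Q β] fun x => ENNReal.ofReal (Real.exp (β * x) / Zβ) :=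
    hac.ae_eq hrn
  have hlog : (fun x => Real.log (((Q β).rnDeriv Q₀ x)).toReal)
      =ᵐ[Q β] (fun x => β * x - Real.log Zβ) := by
    filter_upwards [hrnQβ] with x hx
    rw [hx, ENNReal.toReal_ofReal (hdnn x),
      Real.log_div (Real.exp_ne_zero _) (ne_of_gt hZβpos), Real.log_exp]
  have hlin_int : Integrable (fun x => β * x - Real.log Zβ) (Q β) :=
    (hxQβ.const_mul β).sub (integrable_const _)
  have hIl : Integrable (fun x => Real.log (((Q β).rnDeriv Q₀ x)).toReal) (Q β) :=
    hlin_int.congr hlog.symm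
  have hklval : klDiv (Q β) Q₀ = ((β * m - Real.log Zβ : ℝ) : EReal) := by
    rw [klDiv_eq hac hIl]
    congr 1
    rw [integral_congr_ae hlog,
      integral_sub (hxQβ.const_mul β) (integrable_const _),
      integral_const_mul, integral_const, ← hmint]
    simp
  -- Jensen step
  set c : ℝ := (m - β) * m with hcdef
  have hints : Integrable (fun x => Real.exp ((m - β) * x)) (Q β) := by
    rw [hQβ, integrable_withDensity_iff hdmeas hofReal_lt]
    refine ((hZ m hmΓ).div_const Zβ).congr ?_
    filter_upwards with x
    rw [ENNReal.toReal_ofReal (hdnn x)]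
    rw [show m * x = (m - β) * x + β * x by ring, Real.exp_add, mul_div_assoc]
  have hjensen_ptw : ∀ x : ℝ, Real.exp c + Real.exp c * ((m - β) * x - c)
      ≤ Real.exp ((m - β) * x) := by
    intro x
    have h := Real.add_one_le_exp ((m - β) * x - c)
    have h2 := mul_le_mul_of_nonneg_left h (Real.exp_pos c).le
    rw [← Real.exp_add, show c + ((m - β) * x - c) = (m - β) * x by ring] at h2
    nlinarith [h2]
  have hi_lin : Integrable (fun x : ℝ => (m - β) * x - c) (Q β) :=
    (hxQβ.const_mul (m - β)).sub (integrable_const c)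
  have hi_lin2 : Integrable (fun x : ℝ => Real.exp c * ((m - β) * x - c)) (Q β) :=
    hi_lin.const_mul _
  have hlhs_int : Integrable (fun x => Real.exp c + Real.exp c * ((m - β) * x - c)) (Q β) :=
    (integrable_const _).add hi_lin2
  have hjensen := integral_mono hlhs_int hints (fun x => hjensen_ptw x)
  have hlhs_val : ∫ x, (Real.exp c + Real.exp c * ((m - β) * x - c)) ∂(Q β)
      = Real.exp c := by
    rw [integral_add (integrable_const _) hi_lin2,
      integral_const, integral_const_mul,
      integral_sub (hxQβ.const_mul (m - β)) (integrable_const c),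
      integral_const_mul, integral_const, ← hmint]
    simp [hcdef]
  have hZmZβ : ∫ x, Real.exp ((m - β) * x) ∂(Q β) = Zm / Zβ := by
    rw [hconv]
    have heq2 : ∀ x : ℝ, (Real.exp (β * x) / Zβ) * Real.exp ((m - β) * x)
        = Real.exp (m * x) / Zβ := by
      intro x
      rw [show m * x = (m - β) * x + β * x by ring, Real.exp_add]
      ring
    rw [integral_congr_ae (Filter.Eventually.of_forall (fun x => heq2 x)),
      integral_div, ← hZmdef]
  rw [hlhs_val, hZmZβ] at hjensen
  have hlog2 : c ≤ Real.log Zm - Real.log Zβ := by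
    have h := Real.log_le_log (Real.exp_pos c) hjensen
    rwa [Real.log_exp, Real.log_div (ne_of_gt hZmpos) (ne_of_gt hZβpos)] at h
  have hcoreval : Real.log Zm ≤ m^2/2 := hcore m hmlo hmhi
  rw [hklval]
  have hfinal : (m^2/2 : ℝ) ≤ β * m - Real.log Zβ := by
    have hexpand : c = m * m - β * m := by rw [hcdef]; ring
    nlinarith [hlog2, hcoreval, hexpand]
  exact EReal.coe_le_coe_iff.2 hfinal
end
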